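/- arXiv:2105.01729 — 8 statements merged into one kernel-verified Lean document; each statement's English description precedes it below -/
import Mathlib

section
/- Let B = ⊕_{i∈ℤ} B_i be a ℤ-graded integral domain with saturation index e(B) = 1. For each d ∈ ℕ with d ≥ 2, the set 𝒳_d is nonempty and the following are equivalent: (a) HT(𝒳_d) > 1; (b) gcd(e(B/𝔭), d) = 1 for every homogeneous prime ideal 𝔭 of B of height 1; (c) d ∈ Π*(B). -/
/-- A derivation `D : R → R` is *locally nilpotent* if for every `b` some iterate kills `b`. -/
def Derivation.IsLocallyNilpotentD {R : Type*} [CommRing R] (D : Derivation ℤ R R) : Prop :=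
  ∀ b : R, ∃ n : ℕ, 0 < n ∧ (⇑D)^[n] b = 0

/-- A commutative ring is *rigid* if its only locally nilpotent derivation is `0`. -/
def IsRigidRing (R : Type*) [CommRing R] : Prop :=
  ∀ D : Derivation ℤ R R, Derivation.IsLocallyNilpotentD D → D = 0

/-- `C` is a polynomial ring in one variable over the subring `R`. -/
def IsPolynomialRingOver {C : Type*} [CommRing C] (R : Subring C) : Prop :=
  ∃ e : C ≃+* Polynomial R, ∀ r : R, e (r : C) = Polynomial.C r

/-- `C` is a polynomial ring in one variable over some subring. -/
def IsPolynomialRingInOneVariable (C : Type*) [CommRing C] : Prop :=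
  ∃ R : Subring C, IsPolynomialRingOver R

/-- gcd of a set of integers: the nonnegative generator of the ideal it spans. -/
noncomputable def Set.gcdInt (S : Set ℤ) : ℕ :=
  (Submodule.IsPrincipal.generator (Ideal.span S)).natAbs

section Graded

variable {B : Type*} [CommRing B] (𝒜 : ℤ → Submodule ℤ B)

/-- The `d`-th Veronese subring `B^{(d)} = ⊕_{i ∈ ℤ} B_{d i}` of a `ℤ`-graded ring. -/
def VeroneseSubring (d : ℤ) : Subring B :=
  Subring.closure (⋃ i : ℤ, ((𝒜 (d * i) : Set B)))

/-- The saturation index `e(B) = gcd { i : B_i ≠ 0 }`. -/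
noncomputable def satIndex : ℕ :=
  Set.gcdInt {i : ℤ | 𝒜 i ≠ ⊥}

/-- The saturation index `e(B/𝔭)` of the quotient of `B` by a homogeneous prime `𝔭`;
it equals `gcd { i : B_i ⊄ 𝔭 }`. -/
noncomputable def quotSatIndex (p : Ideal B) : ℕ :=
  Set.gcdInt {i : ℤ | ¬ (𝒜 i : Set B) ⊆ (p : Set B)}

/-- `p` is a prime ideal of height `1` (in a domain). -/
def IsHeightOnePrime {R : Type*} [CommRing R] (p : Ideal R) : Prop :=
  p.IsPrime ∧ p ≠ ⊥ ∧ ∀ q : Ideal R, q.IsPrime → q < p → q = ⊥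

/-- `HT(S) > 1`: no height-one prime ideal contains `S`. -/
def HTgtOne {R : Type*} [CommRing R] (S : Set R) : Prop :=
  ∀ p : Ideal R, IsHeightOnePrime p → ¬ S ⊆ (p : Set R)

variable [GradedAlgebra 𝒜]

/-- `B` is saturated in codimension 1 when `e(B/𝔭) = e(B)` for all homogeneous height-1 primes. -/
def SaturatedInCodimOne : Prop :=
  ∀ p : Ideal B, Ideal.IsHomogeneous 𝒜 p → IsHeightOnePrime p →
    quotSatIndex 𝒜 p = satIndex 𝒜

/-- The set `Π(B)` of prime numbers dividing `e(B/𝔭)` for some homogeneous height-1 prime `𝔭`. -/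
def PiSet : Set ℕ :=
  {q : ℕ | q.Prime ∧ ∃ p : Ideal B, Ideal.IsHomogeneous 𝒜 p ∧ IsHeightOnePrime p ∧
    q ∣ quotSatIndex 𝒜 p}

/-- The set `Π*(B)` of positive natural numbers divisible by no element of `Π(B)`. -/
def PiStar : Set ℕ :=
  {d : ℕ | 1 ≤ d ∧ ∀ q ∈ PiSet 𝒜, ¬ q ∣ d}

/-- The set `𝒳_d` of nonzero homogeneous `x` with `gcd(deg x, d) = 1`. -/
def XSet (d : ℕ) : Set B :=
  {x : B | x ≠ 0 ∧ ∃ i : ℤ, x ∈ 𝒜 i ∧ Int.gcd i (d : ℤ) = 1}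

/-- `f` is a cylindrical element: nonzero, homogeneous of nonzero degree and `B_(f)` is a
polynomial ring in one variable. -/
def IsCylindrical (f : B) : Prop :=
  f ≠ 0 ∧ ∃ i : ℤ, i ≠ 0 ∧ f ∈ 𝒜 i ∧
    IsPolynomialRingInOneVariable (HomogeneousLocalization.Away 𝒜 f)

/-- The degree-zero part `B_0` as a subring of `B`. -/
def degZeroSubring : Subring B where
  carrier := (𝒜 0 : Set B)
  zero_mem' := zero_mem _
  one_mem' := SetLike.one_mem_graded 𝒜
  add_mem' := fun ha hb => add_mem ha hb
  neg_mem' := fun ha => neg_mem ha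
  mul_mem' := fun ha hb => by simpa using SetLike.mul_mem_graded ha hb

end Graded

/-- `(A, B) ∈ EXT` relative to the structure map `ι : A →+* B`: every derivation of `A`
extends uniquely to a derivation of `B`. -/
def MemEXT {A B : Type*} [CommRing A] [CommRing B] (ι : A →+* B) : Prop :=
  ∀ δ : Derivation ℤ A A, ∃! D : Derivation ℤ B B, ∀ a : A, D (ι a) = ι (δ a)

section Aux

lemma natCast_gcdInt_dvd {S : Set ℤ} {x : ℤ} (hx : x ∈ S) : (Set.gcdInt S : ℤ) ∣ x := by
  rw [Set.gcdInt, Int.natAbs_dvd]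
  have h : x ∈ Ideal.span S := Ideal.subset_span hx
  rwa [← Ideal.span_singleton_generator (Ideal.span S), Ideal.mem_span_singleton] at h

lemma dvd_gcdInt_of_forall {S : Set ℤ} {p : ℕ} (h : ∀ x ∈ S, (p : ℤ) ∣ x) :
    p ∣ Set.gcdInt S := by
  have hgen : Submodule.IsPrincipal.generator (Ideal.span S) ∈ Ideal.span S :=
    Submodule.IsPrincipal.generator_mem _
  have hle : Ideal.span S ≤ Ideal.span {(p : ℤ)} := by
    rw [Ideal.span_le]
    intro x hx
    rw [SetLike.mem_coe, Ideal.mem_span_singleton]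
    exact h x hx
  have h2 : (p : ℤ) ∣ Submodule.IsPrincipal.generator (Ideal.span S) :=
    Ideal.mem_span_singleton.mp (hle hgen)
  have h3 := Int.natAbs_dvd_natAbs.mpr h2
  simpa [Set.gcdInt] using h3

lemma exists_coprime_mem {S : Set ℤ} (h0 : (0 : ℤ) ∈ S)
    (hadd : ∀ a ∈ S, ∀ b ∈ S, a + b ∈ S)
    {d : ℕ} (hd : 1 ≤ d) (hgcd : Nat.gcd (Set.gcdInt S) d = 1) :
    ∃ s ∈ S, Int.gcd s d = 1 := by
  classical
  have hd0 : d ≠ 0 := by omega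
  have key : ∀ p : ℕ, ∃ s : ℤ, s ∈ S ∧ (p ∈ d.primeFactors → ¬ (p : ℤ) ∣ s) := by
    intro p
    by_cases hp : p ∈ d.primeFactors
    · by_contra hcon
      push_neg at hcon
      have hall : ∀ x ∈ S, (p : ℤ) ∣ x := fun x hx => (hcon x hx).2
      have h1 : p ∣ Set.gcdInt S := dvd_gcdInt_of_forall hall
      have h2 : p ∣ d := Nat.dvd_of_mem_primeFactors hp
      have h3 : p ∣ 1 := hgcd ▸ Nat.dvd_gcd h1 h2
      exact (Nat.prime_of_mem_primeFactors hp).one_lt.ne' (Nat.dvd_one.mp h3)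
    · exact ⟨0, h0, fun h => absurd h hp⟩
  choose f hfS hf using key
  set c : ℕ → ℕ := fun p => d / p ^ (d.factorization p) with hc
  set s : ℤ := ∑ p ∈ d.primeFactors, (c p : ℤ) * f p with hs
  have hsS : s ∈ S := by
    let M : AddSubmonoid ℤ :=
      { carrier := S, zero_mem' := h0, add_mem' := fun {a b} ha hb => hadd a ha b hb }
    have : s ∈ M := by
      apply AddSubmonoid.sum_mem
      intro p _
      have : (c p : ℤ) * f p = (c p) • f p := by rw [nsmul_eq_mul]
      rw [this]
      exact AddSubmonoid.nsmul_mem M (hfS p) (c p)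
    exact this
  have hndvd : ∀ p ∈ d.primeFactors, ¬ (p : ℤ) ∣ s := by
    intro p hp
    have hpp : p.Prime := Nat.prime_of_mem_primeFactors hp
    have hrest : (p : ℤ) ∣ ∑ q ∈ d.primeFactors.erase p, (c q : ℤ) * f q := by
      apply Finset.dvd_sum
      intro q hq
      have hqp : q ≠ p := Finset.ne_of_mem_erase hq
      have hq' : q ∈ d.primeFactors := Finset.mem_of_mem_erase hq
      have hqq : q.Prime := Nat.prime_of_mem_primeFactors hq'
      have hpcq : p ∣ c q := by
        have hdvd : p ∣ d := Nat.dvd_of_mem_primeFactors hp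
        have hpq : p ≠ q := fun h => hqp h.symm
        have hco : Nat.Coprime p (q ^ d.factorization q) :=
          Nat.Coprime.pow_right _ ((Nat.coprime_primes hpp hqq).mpr hpq)
        have heq : q ^ d.factorization q * c q = d := Nat.ordProj_mul_ordCompl_eq_self d q
        exact hco.dvd_of_dvd_mul_left (by rw [heq]; exact hdvd)
      exact Dvd.dvd.mul_right (Int.natCast_dvd_natCast.mpr hpcq) _
    have hterm : ¬ (p : ℤ) ∣ (c p : ℤ) * f p := by
      have hpz : Prime (p : ℤ) := Nat.prime_iff_prime_int.mp hpp
      rw [hpz.dvd_mul]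
      rintro (h | h)
      · exact Nat.not_dvd_ordCompl hpp hd0 (Int.natCast_dvd_natCast.mp h)
      · exact hf p hp h
    intro hdvds
    apply hterm
    have hsum : s = (c p : ℤ) * f p + ∑ q ∈ d.primeFactors.erase p, (c q : ℤ) * f q :=
      (Finset.add_sum_erase _ _ hp).symm
    have hsub : (p : ℤ) ∣ s - ∑ q ∈ d.primeFactors.erase p, (c q : ℤ) * f q :=
      dvd_sub hdvds hrest
    rw [hsum] at hsub
    simpa using hsub
  refine ⟨s, hsS, ?_⟩
  by_contra hne
  obtain ⟨q, hq, hqdvd⟩ := Nat.exists_prime_and_dvd hne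
  have hgd : Int.gcd s ↑d = Nat.gcd s.natAbs d := by simp [Int.gcd]
  have hqd : q ∣ d := hqdvd.trans (hgd ▸ Nat.gcd_dvd_right s.natAbs d)
  have hqs : (q : ℤ) ∣ s :=
    (Int.natCast_dvd_natCast.mpr hqdvd).trans (Int.gcd_dvd_left s d)
  exact hndvd q (Nat.mem_primeFactors.mpr ⟨hq, hqd, hd0⟩) hqs

lemma lemC {B : Type*} [CommRing B] [IsDomain B] (𝒜 : ℤ → Submodule ℤ B) [GradedAlgebra 𝒜]
    {p : Ideal B} (hp : p.IsPrime) {d : ℕ} (hd : 2 ≤ d) :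
    ¬ (XSet 𝒜 d) ⊆ (p : Set B) ↔ Nat.gcd (quotSatIndex 𝒜 p) d = 1 := by
  constructor
  · intro h
    obtain ⟨x, hxX, hxp⟩ := Set.not_subset.mp h
    obtain ⟨hx0, i, hxi, hgcd⟩ := hxX
    have hiS : i ∈ {i : ℤ | ¬ (𝒜 i : Set B) ⊆ (p : Set B)} := fun hsub => hxp (hsub hxi)
    have hdvd : ((quotSatIndex 𝒜 p : ℕ) : ℤ) ∣ i := natCast_gcdInt_dvd hiS
    have h1 : quotSatIndex 𝒜 p ∣ i.natAbs := Int.natCast_dvd.mp hdvd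
    have h2 : Nat.gcd (quotSatIndex 𝒜 p) d ∣ Int.gcd i d := by
      have hg : Int.gcd i ↑d = Nat.gcd i.natAbs d := by simp [Int.gcd]
      rw [hg]
      exact Nat.dvd_gcd ((Nat.gcd_dvd_left _ _).trans h1) (Nat.gcd_dvd_right _ _)
    rw [hgcd] at h2
    exact Nat.dvd_one.mp h2
  · intro hgcd
    have h0 : (0 : ℤ) ∈ {i : ℤ | ¬ (𝒜 i : Set B) ⊆ (p : Set B)} := by
      intro hsub
      exact hp.ne_top ((Ideal.eq_top_iff_one p).mpr (hsub (SetLike.one_mem_graded 𝒜)))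
    have hadd : ∀ a ∈ {i : ℤ | ¬ (𝒜 i : Set B) ⊆ (p : Set B)},
        ∀ b ∈ {i : ℤ | ¬ (𝒜 i : Set B) ⊆ (p : Set B)},
        a + b ∈ {i : ℤ | ¬ (𝒜 i : Set B) ⊆ (p : Set B)} := by
      intro a ha b hb
      obtain ⟨x, hxa, hxp⟩ := Set.not_subset.mp ha
      obtain ⟨y, hyb, hyp⟩ := Set.not_subset.mp hb
      intro hsub
      have hxy : x * y ∈ p := hsub (SetLike.mul_mem_graded hxa hyb)
      rcases hp.mem_or_mem hxy with h | h
      · exact hxp h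
      · exact hyp h
    obtain ⟨s, hsS, hs⟩ := exists_coprime_mem h0 hadd (by omega) hgcd
    rw [Set.mem_setOf_eq] at hsS
    obtain ⟨x, hxmem, hxp⟩ := Set.not_subset.mp hsS
    refine Set.not_subset.mpr ⟨x, ⟨?_, s, hxmem, hs⟩, hxp⟩
    intro h0x
    exact hxp (h0x ▸ p.zero_mem)

end Aux

/-- Let `B` be a `ℤ`-graded domain with `e(B) = 1` and `d ≥ 2`. Then `𝒳_d`
is nonempty, and: `HT(𝒳_d) > 1` ⟺ `gcd(e(B/𝔭), d) = 1` for every homogeneous height-1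
prime `𝔭` ⟺ `d ∈ Π*(B)`. -/
theorem statement7 {B : Type*} [CommRing B] [IsDomain B]
    (𝒜 : ℤ → Submodule ℤ B) [GradedAlgebra 𝒜]
    (hsat : satIndex 𝒜 = 1)
    (d : ℕ) (hd : 2 ≤ d) :
    (XSet 𝒜 d).Nonempty ∧
    (HTgtOne (XSet 𝒜 d) ↔
      ∀ p : Ideal B, Ideal.IsHomogeneous 𝒜 p → IsHeightOnePrime p →
        Nat.gcd (quotSatIndex 𝒜 p) d = 1) ∧
    ((∀ p : Ideal B, Ideal.IsHomogeneous 𝒜 p → IsHeightOnePrime p →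
        Nat.gcd (quotSatIndex 𝒜 p) d = 1) ↔ d ∈ PiStar 𝒜) := by
  have hbotp : (⊥ : Ideal B).IsPrime := Ideal.bot_prime
  have hbotq : quotSatIndex 𝒜 (⊥ : Ideal B) = satIndex 𝒜 := by
    unfold quotSatIndex satIndex
    congr 1
    ext i
    simp [Set.subset_def, Submodule.eq_bot_iff]
  have hXne : ¬ (XSet 𝒜 d) ⊆ (((⊥ : Ideal B) : Ideal B) : Set B) := by
    rw [lemC 𝒜 hbotp hd, hbotq, hsat]
    simp
  have hne : (XSet 𝒜 d).Nonempty := by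
    obtain ⟨x, hx, -⟩ := Set.not_subset.mp hXne
    exact ⟨x, hx⟩
  refine ⟨hne, ?_, ?_⟩
  · constructor
    · intro h p hhom hp1
      exact (lemC 𝒜 hp1.1 hd).mp (h p hp1)
    · intro h p hp1 hsub
      have hpprime := hp1.1
      set q := (p.homogeneousCore 𝒜).toIdeal with hq
      have hqprime : q.IsPrime := hpprime.homogeneousCore
      have hqle : q ≤ p := Ideal.toIdeal_homogeneousCore_le 𝒜 p
      have hXq : XSet 𝒜 d ⊆ (q : Set B) := by
        intro x hx
        obtain ⟨-, i, hxi, -⟩ := id hx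
        exact Ideal.mem_homogeneousCore_of_homogeneous_of_mem ⟨i, hxi⟩ (hsub hx)
      rcases eq_or_lt_of_le hqle with heq | hlt
      · have hhom : Ideal.IsHomogeneous 𝒜 p := heq ▸ (p.homogeneousCore 𝒜).isHomogeneous
        exact absurd hsub ((lemC 𝒜 hp1.1 hd).mpr (h p hhom hp1))
      · have hqbot : q = ⊥ := hp1.2.2 q hqprime hlt
        obtain ⟨x, hx⟩ := hne
        have hx0 : x ≠ 0 := hx.1
        have hxq : x ∈ q := hXq hx
        rw [hqbot] at hxq
        exact hx0 (by simpa using hxq)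
  · constructor
    · intro h
      refine ⟨by omega, ?_⟩
      rintro qn ⟨hqp, p, hhom, hp1, hqdvd⟩ hqd
      have hg := h p hhom hp1
      have h1 : qn ∣ 1 := hg ▸ Nat.dvd_gcd hqdvd hqd
      exact hqp.one_lt.ne' (Nat.dvd_one.mp h1)
    · rintro ⟨-, h⟩ p hhom hp1
      by_contra hne1
      obtain ⟨qn, hqp, hqdvd⟩ := Nat.exists_prime_and_dvd hne1
      exact h qn ⟨hqp, p, hhom, hp1, hqdvd.trans (Nat.gcd_dvd_left _ _)⟩
        (hqdvd.trans (Nat.gcd_dvd_right _ _))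
end

section
/- Let B = ⊕_{i∈ℤ} B_i be a ℤ-graded integral domain with saturation index e(B) = 1. Then: (a) if S is a subset of ℤ∖{0} satisfying HT(⋃_{i∈S} B_i) > 1, then each element of Π(B) is a prime factor of some element of S; (b) if HT(⋃_{i∈ℤ∖{0}} B_i) > 1 and B is noetherian, then Π(B) is a finite set; (c) if the condition HT(⋃_{i∈ℤ∖{0}} B_i) > 1 is false, then Π(B) is the set of all prime numbers and Π*(B) = {1}. -/
/-- `(A, B) ∈ EXT` relative to the structure map `ι : A →+* B`: every derivation of `A`
extends uniquely to a derivation of `B`. -/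

lemma gcdInt_dvd_of_mem {S : Set ℤ} {m : ℤ} (hm : m ∈ S) : (Set.gcdInt S : ℤ) ∣ m := by
  rw [Set.gcdInt, Int.natAbs_dvd]
  have h : m ∈ Ideal.span S := Ideal.subset_span hm
  rwa [← Ideal.span_singleton_generator (Ideal.span S), Ideal.mem_span_singleton] at h

lemma gcdInt_eq_zero_of_subset_zero {S : Set ℤ} (h : S ⊆ {0}) : Set.gcdInt S = 0 := by
  have hb : Ideal.span S = ⊥ := by
    rw [Ideal.span_eq_bot]; intro x hx; exact h hx
  have h0 : Ideal.span {Submodule.IsPrincipal.generator (Ideal.span S)} = ⊥ := by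
    rw [Ideal.span_singleton_generator, hb]
  have hg : Submodule.IsPrincipal.generator (Ideal.span S) = 0 :=
    Ideal.span_singleton_eq_bot.mp h0
  rw [Set.gcdInt, hg]; rfl

lemma finite_nat_dvd_int {i : ℤ} (hi : i ≠ 0) : {q : ℕ | (q : ℤ) ∣ i}.Finite := by
  apply Set.Finite.subset (Set.finite_Icc 0 i.natAbs)
  intro q hq
  simp only [Set.mem_setOf_eq] at hq
  exact Set.mem_Icc.mpr ⟨Nat.zero_le _,
    Nat.le_of_dvd (Int.natAbs_pos.mpr hi) (Int.natCast_dvd_natCast.mp (Int.dvd_natAbs.mpr hq))⟩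

/-- Let `B` be a `ℤ`-graded domain with `e(B) = 1`. (a) If `S ⊆ ℤ∖{0}` and
`HT(⋃_{i∈S} B_i) > 1`, then every element of `Π(B)` divides some element of `S`. (b) If
`HT(⋃_{i≠0} B_i) > 1` and `B` is noetherian then `Π(B)` is finite. (c) If
`HT(⋃_{i≠0} B_i) > 1` fails then `Π(B)` is the set of all primes and `Π*(B) = {1}`. -/
theorem statement8 {B : Type*} [CommRing B] [IsDomain B]
    (𝒜 : ℤ → Submodule ℤ B) [GradedAlgebra 𝒜]
    (hsat : satIndex 𝒜 = 1) :
    (∀ S : Set ℤ, 0 ∉ S → HTgtOne (⋃ i ∈ S, (𝒜 i : Set B)) →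
      ∀ q ∈ PiSet 𝒜, ∃ m ∈ S, (q : ℤ) ∣ m) ∧
    (HTgtOne (⋃ i ∈ {i : ℤ | i ≠ 0}, (𝒜 i : Set B)) → IsNoetherianRing B →
      (PiSet 𝒜).Finite) ∧
    (¬ HTgtOne (⋃ i ∈ {i : ℤ | i ≠ 0}, (𝒜 i : Set B)) →
      PiSet 𝒜 = {q : ℕ | q.Prime} ∧ PiStar 𝒜 = {1}) := by
  classical
  constructor
  · -- part (a)
    intro S _hS0 hHT q hq
    obtain ⟨hqp, p, hhom, hht, hdvd⟩ := hq
    have hnot := hHT p hht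
    rw [Set.not_subset] at hnot
    obtain ⟨x, hxU, hxp⟩ := hnot
    obtain ⟨i, hiS, hxi⟩ := Set.mem_iUnion₂.mp hxU
    refine ⟨i, hiS, ?_⟩
    have hmem : i ∈ {j : ℤ | ¬ (𝒜 j : Set B) ⊆ (p : Set B)} := fun hsub => hxp (hsub hxi)
    exact dvd_trans (Int.natCast_dvd_natCast.mpr hdvd) (gcdInt_dvd_of_mem hmem)
  constructor
  · -- part (b)
    intro hHT hNoeth
    set S0 : Set B := ⋃ i ∈ {i : ℤ | i ≠ 0}, (𝒜 i : Set B) with hS0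
    have hfg : (Ideal.span S0).FG := (isNoetherianRing_iff_ideal_fg B).mp hNoeth _
    obtain ⟨G, hG⟩ := hfg
    -- for each generator, find a finite subset of S0 spanning it
    have hGmem : ∀ g ∈ G, ∃ T : Finset B, ↑T ⊆ S0 ∧ g ∈ Ideal.span (T : Set B) := by
      intro g hg
      have : g ∈ Ideal.span S0 := by
        rw [← hG]; exact Ideal.subset_span hg
      exact Submodule.mem_span_finite_of_mem_span this
    choose Tg hTgsub hTgmem using hGmem
    set T : Finset B := G.attach.biUnion (fun g => Tg g g.2) with hT
    have hTsub : (T : Set B) ⊆ S0 := by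
      intro t ht
      simp only [hT, Finset.coe_biUnion, Set.mem_iUnion] at ht
      obtain ⟨g, _, htg⟩ := ht
      exact hTgsub g g.2 htg
    have hGspan : ∀ g ∈ G, g ∈ Ideal.span (T : Set B) := by
      intro g hg
      refine Ideal.span_mono ?_ (hTgmem g hg)
      intro t ht
      simp only [hT, Finset.coe_biUnion, Set.mem_iUnion]
      exact ⟨⟨g, hg⟩, Finset.mem_coe.mpr (Finset.mem_attach _ _), ht⟩
    have hspanT : Ideal.span S0 ≤ Ideal.span (T : Set B) := by
      rw [← hG, Ideal.span_le]
      exact fun g hg => hGspan g hg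
    -- choose a nonzero degree for each element of T
    have hdeg : ∀ t : B, t ∈ T → ∃ i : ℤ, i ≠ 0 ∧ t ∈ 𝒜 i := by
      intro t ht
      obtain ⟨i, hi, hmem⟩ := Set.mem_iUnion₂.mp (hTsub ht)
      exact ⟨i, hi, hmem⟩
    choose dg hdg0 hdgm using hdeg
    set d : B → ℤ := fun t => if h : t ∈ T then dg t h else 1 with hd
    have hd0 : ∀ t, d t ≠ 0 := by
      intro t; by_cases h : t ∈ T <;> simp [hd, h, hdg0]
    have key : PiSet 𝒜 ⊆ ⋃ t ∈ (T : Set B), {q : ℕ | (q : ℤ) ∣ d t} := by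
      intro q hq
      obtain ⟨hqp, p, hhom, hht, hdvd⟩ := hq
      have hnot : ¬ (T : Set B) ⊆ (p : Set B) := by
        intro hsub
        refine hHT p hht ?_
        intro x hx
        have : x ∈ Ideal.span (T : Set B) := hspanT (Ideal.subset_span hx)
        have : Ideal.span (T : Set B) ≤ p := by
          rw [Ideal.span_le]; exact hsub
        exact this (hspanT (Ideal.subset_span hx))
      rw [Set.not_subset] at hnot
      obtain ⟨t, htT, htp⟩ := hnot
      have htT' : t ∈ T := htT
      refine Set.mem_iUnion₂.mpr ⟨t, htT, ?_⟩
      have hmem : dg t htT' ∈ {j : ℤ | ¬ (𝒜 j : Set B) ⊆ (p : Set B)} :=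
        fun hsub => htp (hsub (hdgm t htT'))
      have h1 : (q : ℤ) ∣ dg t htT' :=
        dvd_trans (Int.natCast_dvd_natCast.mpr hdvd) (gcdInt_dvd_of_mem hmem)
      simpa [hd, htT'] using h1
    refine Set.Finite.subset ?_ key
    exact Set.Finite.biUnion T.finite_toSet (fun t _ => finite_nat_dvd_int (hd0 t))
  · -- part (c)
    intro hHT
    rw [HTgtOne] at hHT
    push_neg at hHT
    obtain ⟨p, hht, hsub⟩ := hHT
    have hp' : ∀ i : ℤ, i ≠ 0 → (𝒜 i : Set B) ⊆ (p : Set B) := by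
      intro i hi x hx
      exact hsub (Set.mem_iUnion₂.mpr ⟨i, hi, hx⟩)
    -- p is homogeneous
    have hhom : Ideal.IsHomogeneous 𝒜 p := by
      intro i r hr
      rcases eq_or_ne i 0 with rfl | hi
      · by_cases h0 : (0 : ℤ) ∈ (DirectSum.decompose 𝒜 r).support
        · have hsum := DirectSum.sum_support_decompose 𝒜 r
          have heq : (DirectSum.decompose 𝒜 r 0 : B) =
              r - ∑ j ∈ (DirectSum.decompose 𝒜 r).support.erase 0,
                (DirectSum.decompose 𝒜 r j : B) := by
            have hadd := Finset.add_sum_erase (DFinsupp.support (DirectSum.decompose 𝒜 r))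
              (fun j => (DirectSum.decompose 𝒜 r j : B)) h0
            exact eq_sub_iff_add_eq.mpr (hadd.trans hsum)
          rw [heq]
          refine Ideal.sub_mem _ hr (Ideal.sum_mem _ ?_)
          intro j hj
          exact hp' j (Finset.ne_of_mem_erase hj) (SetLike.coe_mem _)
        · rw [DFinsupp.notMem_support_iff.mp h0]
          simp
      · exact hp' i hi (SetLike.coe_mem _)
    have hquot : quotSatIndex 𝒜 p = 0 := by
      apply gcdInt_eq_zero_of_subset_zero
      intro i hi
      simp only [Set.mem_setOf_eq] at hi
      by_contra h0
      exact hi (hp' i h0)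
    have hPi : PiSet 𝒜 = {q : ℕ | q.Prime} := by
      ext q
      constructor
      · exact fun hq => hq.1
      · intro hq
        exact ⟨hq, p, hhom, hht, by rw [hquot]; exact dvd_zero q⟩
    refine ⟨hPi, ?_⟩
    ext d
    simp only [PiStar, hPi, Set.mem_setOf_eq, Set.mem_singleton_iff]
    constructor
    · rintro ⟨hd1, hd⟩
      by_contra hne
      obtain ⟨q, hqp, hqd⟩ := Nat.exists_prime_and_dvd hne
      exact hd q hqp hqd
    · rintro rfl
      exact ⟨le_refl 1, fun q hq hqd => Nat.Prime.one_lt hq |>.ne' (Nat.dvd_one.mp hqd)⟩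
end

section
/- Let B = ⊕_{i∈ℤ} B_i be a ℤ-graded noetherian integral domain with saturation index e(B) = 1, and suppose B = B_0[x_1, …, x_n] where n ≥ 2 and each x_i is a nonzero homogeneous element of degree d_i ∈ ℤ∖{0}. For each i let e_i = gcd(d_1, …, d_{i-1}, d_{i+1}, …, d_n); let U = { i : 1 ≤ i ≤ n and x_i is a unit of B }, U^c = {1,…,n}∖U, and let E be the set of prime factors of ∏_{i∈U^c} e_i (E = ∅ if U^c = ∅). Then: (a) E ⊆ Π(B); (b) if U ≠ ∅ then every element of Π(B) is a prime factor of gcd{ d_i : i ∈ U }; (c) if HT(⋃_{i∈ℤ∖{0}} B_i) > 1 then every element of Π(B) is a prime factor of d_1 ⋯ d_n; (d) if HT({x_i, x_j}) > 1 for every choice of distinct i, j ∈ {1,…,n}, then Π(B) = E. -/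
section AuxProofs

lemma artinian_of_killed_by_maximal {R K : Type*} [CommRing R] [AddCommGroup K] [Module R K]
    [Module.Finite R K] (I : Ideal R) (hI : I.IsMaximal)
    (h : ∀ s ∈ I, ∀ x : K, s • x = 0) : IsArtinian R K := by
  have ht : Module.IsTorsionBySet R K I := fun x s => h s.1 s.2 x
  letI := ht.module
  haveI : IsScalarTower R (R ⧸ I) K := ht.isScalarTower
  haveI : Module.Finite (R ⧸ I) K := Module.Finite.of_restrictScalars_finite R (R ⧸ I) K
  letI : Field (R ⧸ I) := Ideal.Quotient.field I
  haveI hart : IsArtinian (R ⧸ I) K := inferInstance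
  rw [isArtinian_iff] at hart ⊢
  let f : Submodule R K → Submodule (R ⧸ I) K := fun N =>
    { carrier := N
      add_mem' := fun ha hb => N.add_mem ha hb
      zero_mem' := N.zero_mem
      smul_mem' := by
        rintro ⟨c⟩ x hx
        show (Ideal.Quotient.mk I c) • x ∈ N
        rw [ht.mk_smul]
        exact N.smul_mem c hx }
  have hmono : ∀ N N' : Submodule R K, f N < f N' ↔ N < N' := by
    intro N N'
    rw [lt_iff_le_not_ge, lt_iff_le_not_ge]
    constructor
    · rintro ⟨h1, h2⟩
      exact ⟨fun a ha => h1 ha, fun hle => h2 fun a ha => hle ha⟩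
    · rintro ⟨h1, h2⟩
      exact ⟨fun a ha => h1 ha, fun hle => h2 fun a ha => hle ha⟩
  exact Subrelation.wf (fun {N N'} hlt => (hmono N N').mpr hlt) (InvImage.wf f hart)

lemma artinian_quot_pow_maximal {R : Type*} [CommRing R] [IsNoetherianRing R]
    (I : Ideal R) (hI : I.IsMaximal) (k : ℕ) : IsArtinian R (R ⧸ (I ^ k : Ideal R)) := by
  induction k with
  | zero =>
      rw [pow_zero, Ideal.one_eq_top]
      have : Subsingleton (R ⧸ (⊤ : Ideal R)) := Submodule.Quotient.subsingleton_iff.mpr rfl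
      exact isArtinian_of_finite
  | succ k ih =>
      set N : Submodule R (R ⧸ (I ^ (k+1) : Ideal R)) := Submodule.map (I ^ (k+1)).mkQ (I ^ k) with hN
      have hle : (I ^ (k+1) : Ideal R) ≤ I ^ k := Ideal.pow_le_pow_right (Nat.le_succ k)
      haveI : IsArtinian R N := by
        haveI : Module.Finite R N := by
          rw [Module.Finite.iff_fg]
          exact IsNoetherian.noetherian N
        refine artinian_of_killed_by_maximal I hI ?_
        rintro s hs ⟨x, hx⟩
        obtain ⟨y, hy, rfl⟩ := hx
        ext
        show s • (I ^ (k+1)).mkQ y = 0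
        rw [← map_smul, Submodule.mkQ_apply, Submodule.Quotient.mk_eq_zero]
        have : s • y ∈ I * I ^ k := Ideal.mul_mem_mul hs hy
        rwa [← pow_succ'] at this
      haveI : IsArtinian R (R ⧸ (I ^ k : Ideal R)) := ih
      refine isArtinian_of_range_eq_ker N.subtype
        (Submodule.mapQ (I ^ (k+1)) (I ^ k) LinearMap.id hle) ?_
      rw [Submodule.range_subtype]
      ext x
      obtain ⟨y, rfl⟩ := Submodule.mkQ_surjective _ x
      simp only [LinearMap.mem_ker, Submodule.mapQ_apply, LinearMap.id_apply, Submodule.mkQ_apply,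
        Submodule.Quotient.mk_eq_zero, hN, Submodule.mem_map]
      constructor
      · rintro ⟨y', hy', hyy⟩
        have hd : y' - y ∈ (I ^ (k+1) : Ideal R) := (Submodule.Quotient.eq _).mp hyy
        have : y = y' - (y' - y) := by ring
        rw [this]
        exact Submodule.sub_mem _ hy' (hle hd)
      · intro hy
        exact ⟨y, hy, rfl⟩

lemma exists_heightOnePrime_mem {B : Type*} [CommRing B] [IsDomain B] [IsNoetherianRing B]
    {x : B} (hx0 : x ≠ 0) (hxu : ¬ IsUnit x) :
    ∃ p : Ideal B, p.IsPrime ∧ x ∈ p ∧ p ≠ ⊥ ∧ ∀ q : Ideal B, q.IsPrime → q < p → q = ⊥ := by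
  have hspan : Ideal.span {x} ≠ ⊤ := fun h => hxu (Ideal.span_singleton_eq_top.mp h)
  obtain ⟨J, hJmax, hJ⟩ := Ideal.exists_le_maximal _ hspan
  haveI := hJmax.isPrime
  obtain ⟨p, hp, -⟩ := Ideal.exists_minimalPrimes_le hJ
  have hpprime : p.IsPrime := hp.1.1
  have hxp : x ∈ p := hp.1.2 (Ideal.mem_span_singleton_self x)
  haveI := hpprime
  refine ⟨p, hpprime, hxp, fun h => hx0 (by rw [h] at hxp; simpa using hxp), ?_⟩
  intro q hq hqp
  have hxq : x ∉ q := by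
    intro hxq
    exact absurd (hp.2 ⟨hq, (Ideal.span_singleton_le_iff_mem q).mpr hxq⟩ hqp.le)
      (not_le_of_gt hqp)
  set S := Localization.AtPrime p with hS
  set φ : B →+* S := algebraMap B S with hφ
  haveI hSnoeth : IsNoetherianRing S := IsLocalization.isNoetherianRing p.primeCompl S inferInstance
  have hMle : p.primeCompl ≤ nonZeroDivisors B :=
    le_nonZeroDivisors_of_noZeroDivisors (fun h => h (zero_mem p))
  haveI : IsDomain S := IsLocalization.isDomain_of_le_nonZeroDivisors (R := B) (M := p.primeCompl) (S := S) hMle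
  have hφinj : Function.Injective φ := IsLocalization.injective S hMle
  set M := IsLocalRing.maximalIdeal S with hM
  have hcomapM : Ideal.comap φ M = p := Localization.AtPrime.comap_maximalIdeal
  have hxM : φ x ∈ M := by rw [← hcomapM] at hxp; exact hxp
  have hmapp : Ideal.map φ p = M := by
    conv_rhs => rw [← IsLocalization.map_comap p.primeCompl S M]
    exact congrArg (Ideal.map φ) hcomapM.symm
  have hrad : Ideal.radical (Ideal.span {φ x}) = M := by
    rw [Ideal.radical_eq_sInf]
    apply le_antisymm
    · exact sInf_le ⟨(Ideal.span_singleton_le_iff_mem M).mpr hxM,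
        (IsLocalRing.maximalIdeal.isMaximal S).isPrime⟩
    · refine le_sInf ?_
      rintro P ⟨hPx, hPprime⟩
      have hcP := (IsLocalization.isPrime_iff_isPrime_disjoint p.primeCompl S P).mp hPprime
      have hcPle : Ideal.comap φ P ≤ p := by
        intro a ha
        by_contra hap
        exact Set.disjoint_left.mp hcP.2 hap ha
      have hxcP : x ∈ Ideal.comap φ P := hPx (Ideal.mem_span_singleton_self (φ x))
      have hple : p ≤ Ideal.comap φ P :=
        hp.2 ⟨hcP.1, (Ideal.span_singleton_le_iff_mem _).mpr hxcP⟩ hcPle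
      have hcPeq : Ideal.comap φ P = p := le_antisymm hcPle hple
      rw [← IsLocalization.map_comap p.primeCompl S P]; change M ≤ Ideal.map φ (Ideal.comap φ P); rw [hcPeq, hmapp]
  obtain ⟨k, hk⟩ := Ideal.exists_radical_pow_le_of_fg (Ideal.span {φ x}) (IsNoetherian.noetherian _)
  rw [hrad] at hk
  set Q := Ideal.map φ q with hQdef
  have hdisj : Disjoint (p.primeCompl : Set B) (q : Set B) := by
    rw [Set.disjoint_left]; intro a ha haq; exact ha (hqp.le haq)
  have hQprime : Q.IsPrime := IsLocalization.isPrime_of_isPrime_disjoint p.primeCompl S q hq hdisj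
  have hcomapQ : Ideal.comap φ Q = q :=
    IsLocalization.comap_map_of_isPrime_disjoint p.primeCompl S hq hdisj
  have hxQ : φ x ∉ Q := fun h => hxq (by rw [← hcomapQ]; exact h)
  haveI := hQprime
  set T := Localization.AtPrime Q with hT
  set ψ : S →+* T := algebraMap S T with hψ
  have hQ0 : Q.primeCompl ≤ nonZeroDivisors S :=
    le_nonZeroDivisors_of_noZeroDivisors (fun h => h (zero_mem Q))
  haveI : IsDomain T := IsLocalization.isDomain_of_le_nonZeroDivisors (R := S) (M := Q.primeCompl) (S := T) hQ0
  haveI : IsNoetherianRing T := IsLocalization.isNoetherianRing Q.primeCompl T hSnoeth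
  have hψinj : Function.Injective ψ := IsLocalization.injective T hQ0
  set Qs : ℕ → Ideal S := fun m => Ideal.comap ψ (Ideal.map ψ (Q ^ m)) with hQs
  have hQsanti : ∀ {a b : ℕ}, a ≤ b → Qs b ≤ Qs a := fun h =>
    Ideal.comap_mono (Ideal.map_mono (Ideal.pow_le_pow_right h))
  set C : ℕ → Ideal S := fun m => Qs m ⊔ Ideal.span {φ x} with hC
  have hCanti : ∀ {a b : ℕ}, a ≤ b → C b ≤ C a := fun h => sup_le_sup_right (hQsanti h) _
  have hkC : ∀ m, (M ^ k : Ideal S) ≤ C m := fun m => le_trans hk le_sup_right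
  haveI hart : IsArtinian S (S ⧸ (M ^ k : Ideal S)) :=
    artinian_quot_pow_maximal M (IsLocalRing.maximalIdeal.isMaximal S) k
  obtain ⟨n₀, hn₀⟩ := IsArtinian.monotone_stabilizes (R := S) (M := S ⧸ (M ^ k : Ideal S))
    ⟨fun m => OrderDual.toDual (Submodule.map (M ^ k : Ideal S).mkQ (C m)),
     fun a b h => Submodule.map_mono (hCanti h)⟩
  set n := n₀ + 1 with hn
  have hD : Submodule.map (M ^ k : Ideal S).mkQ (C n) = Submodule.map (M ^ k : Ideal S).mkQ (C (n+1)) := by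
    have h1 := hn₀ n (Nat.le_succ n₀)
    have h2 := hn₀ (n+1) (by omega)
    exact (congrArg OrderDual.ofDual h1).symm.trans (congrArg OrderDual.ofDual h2)
  have hCeq : C n = C (n+1) := by
    have e1 := congrArg (Submodule.comap (M ^ k : Ideal S).mkQ) hD
    rw [Submodule.comap_map_mkQ, Submodule.comap_map_mkQ,
      sup_eq_right.mpr (hkC n), sup_eq_right.mpr (hkC (n+1))] at e1
    exact e1
  have hstep : Qs n ≤ Qs (n+1) ⊔ (Ideal.span {φ x} • Qs n : Ideal S) := by
    intro a ha
    have haC : a ∈ C (n+1) := hCeq ▸ (le_sup_left (a := Qs n) (b := Ideal.span {φ x}) ha)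
    rw [hC] at haC
    obtain ⟨b, hb, c, hc, rfl⟩ := Submodule.mem_sup.mp haC
    obtain ⟨r, hr⟩ := Ideal.mem_span_singleton'.mp hc
    have hcQs : c ∈ Qs n := by
      have : c = b + c - b := by ring
      rw [this]
      exact Submodule.sub_mem _ ha (hQsanti (Nat.le_succ n) hb)
    have hrQs : r ∈ Qs n := by
      have hu : IsUnit (ψ (φ x)) := IsLocalization.map_units T (⟨φ x, hxQ⟩ : Q.primeCompl)
      have h1 : ψ (φ x) * ψ r ∈ Ideal.map ψ (Q ^ n) := by
        rw [← hr] at hcQs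
        have h2 : ψ (r * φ x) ∈ Ideal.map ψ (Q ^ n) := hcQs
        rw [map_mul] at h2
        rwa [mul_comm]
      exact (Ideal.unit_mul_mem_iff_mem _ hu).mp h1
    refine Submodule.add_mem_sup hb ?_
    rw [Ideal.smul_eq_mul, ← hr, mul_comm r (φ x)]
    exact Ideal.mul_mem_mul (Ideal.mem_span_singleton_self (φ x)) hrQs
  have hjac : Ideal.span {φ x} ≤ Ideal.jacobson ⊥ := by
    rw [IsLocalRing.jacobson_eq_maximalIdeal ⊥ bot_ne_top]
    exact (Ideal.span_singleton_le_iff_mem M).mpr hxM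
  have hQseq : Qs n = Qs (n+1) :=
    le_antisymm (Submodule.le_of_le_smul_of_le_jacobson_bot (IsNoetherian.noetherian _) hjac hstep)
      (hQsanti (Nat.le_succ n))
  have hmapQs : ∀ m : ℕ, Ideal.map ψ (Qs m) = Ideal.map ψ (Q ^ m) := fun m =>
    IsLocalization.map_comap Q.primeCompl T (Ideal.map ψ (Q ^ m))
  have hmapeq : Ideal.map ψ (Q ^ n) = Ideal.map ψ (Q ^ (n+1)) := by
    rw [← hmapQs, ← hmapQs, hQseq]
  have hMT : Ideal.map ψ Q = IsLocalRing.maximalIdeal T := by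
    conv_rhs => rw [← IsLocalization.map_comap Q.primeCompl T (IsLocalRing.maximalIdeal T)]
    rw [Localization.AtPrime.comap_maximalIdeal]
  have hNbot : Ideal.map ψ (Q ^ n) = ⊥ := by
    refine Submodule.eq_bot_of_le_smul_of_le_jacobson_bot (Ideal.map ψ Q) _
      (IsNoetherian.noetherian _) ?_ ?_
    · rw [Ideal.smul_eq_mul]
      refine le_of_eq ?_
      conv_lhs => rw [hmapeq, pow_succ', Ideal.map_mul]
    · rw [IsLocalRing.jacobson_eq_maximalIdeal ⊥ bot_ne_top, hMT]
  have hQn : Q ^ n = ⊥ := by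
    have h1 : Q ^ n ≤ Ideal.comap ψ ⊥ := by
      rw [← hNbot]; exact Ideal.le_comap_map
    refine le_bot_iff.mp (le_trans h1 ?_)
    intro a ha
    have : ψ a = 0 := ha
    have : a = 0 := hψinj (by rw [this, map_zero])
    simp [this]
  have hQbot : Q = ⊥ := by
    refine le_bot_iff.mp ?_
    intro a ha
    have h1 : a ^ n ∈ Q ^ n := Ideal.pow_mem_pow ha n
    rw [hQn] at h1
    have : a ^ n = 0 := h1
    have : a = 0 := pow_eq_zero_iff (by omega : n ≠ 0) |>.mp this
    simp [this]
  rw [← hcomapQ, hQbot]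
  refine le_bot_iff.mp ?_
  intro a ha
  have : φ a = 0 := ha
  have : a = 0 := hφinj (by rw [this, map_zero])
  simp [this]

lemma Set.gcdInt_dvd {S : Set ℤ} {m : ℤ} (hm : m ∈ S) : ((S.gcdInt : ℤ)) ∣ m := by
  rw [Set.gcdInt, Int.natAbs_dvd]
  rw [← Ideal.mem_span_singleton, Ideal.span_singleton_generator]
  exact Ideal.subset_span hm

lemma dvd_gcdInt {S : Set ℤ} {k : ℕ} (h : ∀ m ∈ S, (k : ℤ) ∣ m) : k ∣ S.gcdInt := by
  have h1 : Ideal.span S ≤ Ideal.span {(k : ℤ)} := by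
    rw [Ideal.span_le]
    intro m hm
    exact Ideal.mem_span_singleton.mpr (h m hm)
  have h2 := h1 (Submodule.IsPrincipal.generator_mem (Ideal.span S))
  rw [Ideal.mem_span_singleton] at h2
  exact Int.ofNat_dvd.mp (Int.dvd_natAbs.mpr h2)

section KEY
variable {B : Type*} [CommRing B] (𝒜 : ℤ → Submodule ℤ B) [GradedAlgebra 𝒜]

lemma prod_pow_mem_deg {n : ℕ} (x : Fin n → B) (d : Fin n → ℤ) (hxd : ∀ i, x i ∈ 𝒜 (d i))
    (a : Fin n → ℕ) : (∏ j, x j ^ a j) ∈ 𝒜 (∑ j, (a j : ℤ) * d j) := by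
  have := SetLike.prod_pow_mem_graded 𝒜 (F := Finset.univ) (i := d) (g := x) a
    (fun k _ => hxd k)
  simpa [nsmul_eq_mul] using this

lemma key_monomial {n : ℕ} (x : Fin n → B) (d : Fin n → ℤ) (hxd : ∀ i, x i ∈ 𝒜 (d i))
    (hgen : Subring.closure ((𝒜 0 : Set B) ∪ Set.range x) = ⊤)
    (p : Ideal B) {m : ℤ} {u : B} (hu : u ∈ 𝒜 m) (hup : u ∉ p) :
    ∃ a : Fin n → ℕ, (∑ j, (a j : ℤ) * d j) = m ∧ (∏ j, x j ^ a j) ∉ p := by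
  classical
  set P : Set B := {b | ∃ c ∈ (𝒜 0 : Set B), ∃ a : Fin n → ℕ, b = c * ∏ j, x j ^ a j} with hP
  have hmono : ∀ a : Fin n → ℕ, (∏ j, x j ^ a j) ∈ 𝒜 (∑ j, (a j : ℤ) * d j) := by
    intro a
    have := SetLike.prod_pow_mem_graded 𝒜 (F := Finset.univ) (i := d) (g := x) a
      (fun k _ => hxd k)
    simpa [nsmul_eq_mul] using this
  -- Every element lies in the additive closure of monomials
  have hall : ∀ b : B, b ∈ AddSubgroup.closure P := by
    intro b
    have hW : ∀ b1 ∈ AddSubgroup.closure P, ∀ b2 ∈ AddSubgroup.closure P,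
        b1 * b2 ∈ AddSubgroup.closure P := by
      intro b1 hb1
      induction hb1 using AddSubgroup.closure_induction with
      | mem y hy =>
          intro b2 hb2
          induction hb2 using AddSubgroup.closure_induction with
          | mem z hz =>
              obtain ⟨c, hc, a, rfl⟩ := hy
              obtain ⟨c', hc', a', rfl⟩ := hz
              refine AddSubgroup.subset_closure ?_
              refine ⟨c * c', ?_, fun j => a j + a' j, ?_⟩
              · simpa using SetLike.mul_mem_graded hc hc'
              · have hpr : (∏ j, x j ^ (a j + a' j)) = (∏ j, x j ^ a j) * ∏ j, x j ^ a' j := by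
                  rw [← Finset.prod_mul_distrib]
                  exact Finset.prod_congr rfl fun j _ => pow_add (x j) (a j) (a' j)
                show _ = c * c' * ∏ j, x j ^ (a j + a' j)
                rw [hpr]; ring
          | zero => simpa using (AddSubgroup.closure P).zero_mem
          | add z w _ _ hz hw => rw [mul_add]; exact (AddSubgroup.closure P).add_mem hz hw
          | neg z _ hz => rw [mul_neg]; exact (AddSubgroup.closure P).neg_mem hz
      | zero => intro b2 _; rw [zero_mul]; exact (AddSubgroup.closure P).zero_mem
      | add z w _ _ hz hw =>
          intro b2 hb2
          rw [add_mul]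
          exact (AddSubgroup.closure P).add_mem (hz b2 hb2) (hw b2 hb2)
      | neg z _ hz =>
          intro b2 hb2
          rw [neg_mul]
          exact (AddSubgroup.closure P).neg_mem (hz b2 hb2)
    let W : Subring B :=
      { carrier := (AddSubgroup.closure P : Set B)
        zero_mem' := (AddSubgroup.closure P).zero_mem
        add_mem' := fun ha hb => (AddSubgroup.closure P).add_mem ha hb
        neg_mem' := fun ha => (AddSubgroup.closure P).neg_mem ha
        one_mem' := AddSubgroup.subset_closure
          ⟨1, SetLike.one_mem_graded 𝒜, fun _ => 0, by simp⟩
        mul_mem' := fun ha hb => hW _ ha _ hb }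
    have : Subring.closure ((𝒜 0 : Set B) ∪ Set.range x) ≤ W := by
      rw [Subring.closure_le]
      rintro b (hb | ⟨i, rfl⟩)
      · exact AddSubgroup.subset_closure ⟨b, hb, fun _ => 0, by simp⟩
      · refine AddSubgroup.subset_closure ⟨1, SetLike.one_mem_graded 𝒜, Pi.single i 1, ?_⟩
        rw [one_mul]
        rw [Finset.prod_eq_single i (fun j _ hj => by simp [Pi.single_eq_of_ne hj])
          (by simp)]
        simp
    exact this (by rw [hgen]; exact Subring.mem_top b)
  -- Induction to get the monomial witness
  set Q : B → Prop := fun b => (GradedRing.proj 𝒜 m) b ∈ p ∨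
    ∃ a : Fin n → ℕ, (∑ j, (a j : ℤ) * d j) = m ∧ (∏ j, x j ^ a j) ∉ p with hQ
  have hQall : ∀ b, b ∈ AddSubgroup.closure P → Q b := by
    intro b hb
    induction hb using AddSubgroup.closure_induction with
    | mem y hy =>
        obtain ⟨c, hc, a, rfl⟩ := hy
        have hyl : c * ∏ j, x j ^ a j ∈ 𝒜 (∑ j, (a j : ℤ) * d j) := by
          simpa using SetLike.mul_mem_graded hc (hmono a)
        by_cases hlm : (∑ j, (a j : ℤ) * d j) = m
        · by_cases hyp : c * ∏ j, x j ^ a j ∈ p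
          · left
            rw [GradedRing.proj_apply, DirectSum.decompose_of_mem_same 𝒜 (hlm ▸ hyl)]
            exact hyp
          · right
            refine ⟨a, hlm, fun hprod => hyp (Ideal.mul_mem_left p c hprod)⟩
        · left
          rw [GradedRing.proj_apply, DirectSum.decompose_of_mem_ne 𝒜 hyl hlm]
          exact p.zero_mem
    | zero => left; rw [map_zero]; exact p.zero_mem
    | add z w _ _ hz hw =>
        rcases hz with hz | hz
        · rcases hw with hw | hw
          · left; rw [map_add]; exact p.add_mem hz hw
          · right; exact hw
        · right; exact hz
    | neg z _ hz =>
        rcases hz with hz | hz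
        · left; rw [map_neg]; exact p.neg_mem hz
        · right; exact hz
  rcases hQall u (hall u) with hQu | hQu
  · exfalso
    rw [GradedRing.proj_apply, DirectSum.decompose_of_mem_same 𝒜 hu] at hQu
    exact hup hQu
  · exact hQu

end KEY

end AuxProofs

/-- Let `B` be a `ℤ`-graded noetherian domain with `e(B) = 1`,
`B = B₀[x₁,…,xₙ]` with `n ≥ 2` and `xᵢ` nonzero homogeneous of degree `dᵢ ≠ 0`. With
`eᵢ = gcd(d₁,…,d̂ᵢ,…,dₙ)`, `U = {i : xᵢ is a unit}` and `E` the set of prime factors of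
`∏_{i∉U} eᵢ`: (a) `E ⊆ Π(B)`; (b) if `U ≠ ∅` then every element of `Π(B)` divides `dᵢ` for
each `i ∈ U`; (c) if `HT(⋃_{i≠0} B_i) > 1` then every element of `Π(B)` divides `d₁⋯dₙ`;
(d) if `HT({xᵢ,xⱼ}) > 1` for all `i ≠ j`, then `Π(B) = E`. -/
theorem statement9 {B : Type*} [CommRing B] [IsDomain B] [IsNoetherianRing B]
    (𝒜 : ℤ → Submodule ℤ B) [GradedAlgebra 𝒜]
    (hsat : satIndex 𝒜 = 1)
    (n : ℕ) (hn : 2 ≤ n) (x : Fin n → B) (d : Fin n → ℤ)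
    (hx0 : ∀ i, x i ≠ 0) (hd0 : ∀ i, d i ≠ 0) (hxd : ∀ i, x i ∈ 𝒜 (d i))
    (hgen : Subring.closure ((𝒜 0 : Set B) ∪ Set.range x) = ⊤) :
    (∀ q : ℕ, q.Prime →
      (∃ i, ¬ IsUnit (x i) ∧ (q : ℤ) ∣ Finset.gcd (Finset.univ.erase i) d) →
      q ∈ PiSet 𝒜) ∧
    ((∃ i, IsUnit (x i)) → ∀ q ∈ PiSet 𝒜, ∀ i, IsUnit (x i) → (q : ℤ) ∣ d i) ∧
    (HTgtOne (⋃ i ∈ {i : ℤ | i ≠ 0}, (𝒜 i : Set B)) →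
      ∀ q ∈ PiSet 𝒜, (q : ℤ) ∣ ∏ i, d i) ∧
    ((∀ i j, i ≠ j → HTgtOne {x i, x j}) →
      PiSet 𝒜 = {q : ℕ | q.Prime ∧
        ∃ i, ¬ IsUnit (x i) ∧ (q : ℤ) ∣ Finset.gcd (Finset.univ.erase i) d}) := by
  classical
  have hquotdvd : ∀ (p : Ideal B), p.IsPrime → ∀ j, x j ∉ p →
      ((quotSatIndex 𝒜 p : ℤ)) ∣ d j := by
    intro p hp j hxj
    have hm : d j ∈ {m : ℤ | ¬ (𝒜 m : Set B) ⊆ (p : Set B)} := by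
      intro h
      exact hxj (h (hxd j))
    exact Set.gcdInt_dvd hm
  have parta : ∀ q : ℕ, q.Prime →
      (∃ i, ¬ IsUnit (x i) ∧ (q : ℤ) ∣ Finset.gcd (Finset.univ.erase i) d) →
      q ∈ PiSet 𝒜 := by
    rintro q hq ⟨i, hnu, hdvd⟩
    obtain ⟨p0, hp0prime, hxi, hp0ne, hp0ht⟩ := exists_heightOnePrime_mem (hx0 i) hnu
    set p := (Ideal.homogeneousCore 𝒜 p0).toIdeal with hpdef
    have hphom : Ideal.IsHomogeneous 𝒜 p := (Ideal.homogeneousCore 𝒜 p0).is_homogeneous'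
    have hpprime : p.IsPrime := hp0prime.homogeneousCore
    have hple : p ≤ p0 := Ideal.toIdeal_homogeneousCore_le 𝒜 p0
    have hxip : x i ∈ p :=
      Ideal.mem_homogeneousCore_of_homogeneous_of_mem ⟨d i, hxd i⟩ hxi
    have hpht : IsHeightOnePrime p := by
      refine ⟨hpprime, ?_, ?_⟩
      · intro h
        rw [h] at hxip
        exact hx0 i (by simpa using hxip)
      · intro q' hq' hlt
        exact hp0ht q' hq' (lt_of_lt_of_le hlt hple)
    refine ⟨hq, p, hphom, hpht, ?_⟩
    show q ∣ Set.gcdInt {m : ℤ | ¬ (𝒜 m : Set B) ⊆ (p : Set B)}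
    refine dvd_gcdInt ?_
    intro m hm
    rw [Set.mem_setOf_eq] at hm
    obtain ⟨u, hu, hup⟩ := Set.not_subset.mp hm
    obtain ⟨a, hsum, hprod⟩ := key_monomial 𝒜 x d hxd hgen p hu hup
    have hai : a i = 0 := by
      by_contra hai
      apply hprod
      rw [← Finset.prod_erase_mul _ _ (Finset.mem_univ i)]
      exact Ideal.mul_mem_left _ _ (Ideal.pow_mem_of_mem p hxip _ (Nat.pos_of_ne_zero hai))
    have hdvdsum : (q : ℤ) ∣ ∑ j ∈ Finset.univ.erase i, (a j : ℤ) * d j :=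
      Finset.dvd_sum fun j hj => Dvd.dvd.mul_left (dvd_trans hdvd (Finset.gcd_dvd hj)) _
    rw [← hsum, ← Finset.sum_erase_add _ _ (Finset.mem_univ i), hai]
    simpa using hdvdsum
  refine ⟨parta, ?_, ?_, ?_⟩
  · rintro - q ⟨hq, p, hphom, hpht, hdvd⟩ i hui
    have hxip : x i ∉ p := fun h => hpht.1.ne_top (Ideal.eq_top_of_isUnit_mem p h hui)
    exact dvd_trans (Int.natCast_dvd_natCast.mpr hdvd) (hquotdvd p hpht.1 i hxip)
  · rintro hht q ⟨hq, p, hphom, hpht, hdvd⟩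
    obtain ⟨u, hu, hup⟩ := Set.not_subset.mp (hht p hpht)
    rw [Set.mem_iUnion₂] at hu
    obtain ⟨m, hm0, hum⟩ := hu
    obtain ⟨a, hsum, hprod⟩ := key_monomial 𝒜 x d hxd hgen p hum hup
    have hex : ∃ j, a j ≠ 0 := by
      by_contra h
      push_neg at h
      apply hm0
      rw [← hsum]
      simp [h]
    obtain ⟨j, hj⟩ := hex
    have hxj : x j ∉ p := by
      intro hxj
      apply hprod
      rw [← Finset.prod_erase_mul _ _ (Finset.mem_univ j)]
      exact Ideal.mul_mem_left _ _ (Ideal.pow_mem_of_mem p hxj _ (Nat.pos_of_ne_zero hj))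
    exact dvd_trans (dvd_trans (Int.natCast_dvd_natCast.mpr hdvd) (hquotdvd p hpht.1 j hxj))
      (Finset.dvd_prod_of_mem d (Finset.mem_univ j))
  · intro hht
    ext q
    simp only [Set.mem_setOf_eq]
    constructor
    · rintro ⟨hq, p, hphom, hpht, hdvd⟩
      haveI := hpht.1
      refine ⟨hq, ?_⟩
      have hex : ∃ i, x i ∈ p := by
        by_contra h
        push_neg at h
        have hseteq : {m : ℤ | ¬ (𝒜 m : Set B) ⊆ (p : Set B)} = {m : ℤ | 𝒜 m ≠ ⊥} := by
          ext m
          simp only [Set.mem_setOf_eq]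
          constructor
          · intro hm hbot
            apply hm
            rw [hbot]
            intro u hu
            have : u = (0 : B) := hu
            rw [this]
            exact p.zero_mem
          · intro hm hsub
            obtain ⟨u, hu, hu0⟩ := (Submodule.ne_bot_iff _).mp hm
            obtain ⟨a, hsum, hprod⟩ := key_monomial 𝒜 x d hxd hgen ⊥ hu
              (by simpa using hu0)
            have hmon : (∏ j, x j ^ a j) ∈ 𝒜 m := hsum ▸ prod_pow_mem_deg 𝒜 x d hxd a
            have hmem : (∏ j, x j ^ a j) ∈ p := hsub hmon
            rw [Ideal.IsPrime.prod_mem_iff] at hmem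
            obtain ⟨j, -, hjp⟩ := hmem
            exact h j (hpht.1.mem_of_pow_mem _ hjp)
        have hone : quotSatIndex 𝒜 p = 1 := by
          show Set.gcdInt {m : ℤ | ¬ (𝒜 m : Set B) ⊆ (p : Set B)} = 1
          rw [hseteq]
          exact hsat
        rw [hone] at hdvd
        exact hq.ne_one (Nat.dvd_one.mp hdvd)
      obtain ⟨i, hip⟩ := hex
      refine ⟨i, fun hu => hpht.1.ne_top (Ideal.eq_top_of_isUnit_mem p hip hu), ?_⟩
      refine Finset.dvd_gcd fun j hj => ?_
      have hji : j ≠ i := Finset.ne_of_mem_erase hj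
      have hxj : x j ∉ p := by
        intro hxj
        refine hht j i hji p hpht ?_
        rintro y (rfl | rfl)
        · exact hxj
        · exact hip
      exact dvd_trans (Int.natCast_dvd_natCast.mpr hdvd) (hquotdvd p hpht.1 j hxj)
    · rintro ⟨hq, hE⟩
      exact parta q hq hE
end

section
/- Let B be a noetherian normal integral domain and A a subring of B. Suppose that (Frac A, Frac B) ∈ EXT, and that there exists a family (f_i)_{i∈I} of nonzero elements of A such that: (i) (A_{f_i}, B_{f_i}) ∈ EXT for every i ∈ I, where A_{f_i} and B_{f_i} denote localizations at the powers of f_i; and (ii) no height-1 prime ideal of B contains all the f_i. Then (A, B) ∈ EXT. -/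
section AuxStatement11

section DerivLoc

open TrivSqZeroExt

variable {R : Type*} [CommRing R] (S : Type*) [CommRing S] [Algebra R S]

/-- The ring hom `R → S[ε]` attached to a derivation `δ : R → R`. -/
noncomputable def derivDualHom (δ : Derivation ℤ R R) : R →+* TrivSqZeroExt S S where
  toFun r := inl (algebraMap R S r) + inr (algebraMap R S (δ r))
  map_one' := by
    ext
    · simp only [fst_add, fst_inl, fst_inr, add_zero, map_one, fst_one]
    · simp only [snd_add, snd_inl, snd_inr, zero_add, Derivation.map_one_eq_zero, map_zero,
        snd_one]
  map_mul' x y := by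
    ext
    · simp only [fst_mul, fst_add, fst_inl, fst_inr, add_zero, map_mul]
    · simp only [snd_mul, snd_add, snd_inl, snd_inr, zero_add, fst_add, fst_inl, fst_inr,
        add_zero, Derivation.leibniz, map_add, smul_eq_mul, MulOpposite.smul_eq_mul_unop,
        MulOpposite.unop_op, Algebra.smul_def, map_mul]
      ring
  map_zero' := by
    ext
    · simp only [fst_add, fst_inl, fst_inr, add_zero, map_zero, fst_zero]
    · simp only [snd_add, snd_inl, snd_inr, zero_add, map_zero, snd_zero]
  map_add' x y := by
    ext
    · simp only [fst_add, fst_inl, fst_inr, add_zero, map_add]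
    · simp only [snd_add, snd_inl, snd_inr, zero_add, map_add]

@[simp] lemma derivDualHom_fst (δ : Derivation ℤ R R) (r : R) :
    (derivDualHom S δ r).fst = algebraMap R S r := by
  simp only [derivDualHom, RingHom.coe_mk, MonoidHom.coe_mk, OneHom.coe_mk, fst_add, fst_inl,
    fst_inr, add_zero]

@[simp] lemma derivDualHom_snd (δ : Derivation ℤ R R) (r : R) :
    (derivDualHom S δ r).snd = algebraMap R S (δ r) := by
  simp only [derivDualHom, RingHom.coe_mk, MonoidHom.coe_mk, OneHom.coe_mk, snd_add, snd_inl,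
    snd_inr, zero_add]

theorem exists_derivation_localization (M : Submonoid R) [IsLocalization M S]
    (δ : Derivation ℤ R R) :
    ∃ D : Derivation ℤ S S, ∀ r, D (algebraMap R S r) = algebraMap R S (δ r) := by
  have hu : ∀ m : M, IsUnit (derivDualHom S δ m) := by
    intro m
    rw [TrivSqZeroExt.isUnit_iff_isUnit_fst, derivDualHom_fst]
    exact IsLocalization.map_units S m
  let H : S →+* TrivSqZeroExt S S := IsLocalization.lift hu
  have hH : ∀ r : R, H (algebraMap R S r) = derivDualHom S δ r :=
    fun r => IsLocalization.lift_eq hu r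
  have hfst : ∀ s : S, (H s).fst = s := by
    intro s
    have : (TrivSqZeroExt.fstHom S S S).toRingHom.comp H = RingHom.id S := by
      apply IsLocalization.ringHom_ext M
      ext r
      simp [H, hH r]
    exact RingHom.congr_fun this s
  let Dadd : S →+ S :=
    (TrivSqZeroExt.sndHom S S).toAddMonoidHom.comp H.toAddMonoidHom
  refine ⟨{ toLinearMap := Dadd.toIntLinearMap
            map_one_eq_zero' := ?_
            leibniz' := ?_ }, ?_⟩
  · show (H 1).snd = 0
    rw [map_one]; simp
  · intro a b
    show (H (a * b)).snd = a • (H b).snd + b • (H a).snd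
    rw [map_mul, TrivSqZeroExt.snd_mul, hfst, hfst]
    simp only [smul_eq_mul, MulOpposite.smul_eq_mul_unop, MulOpposite.unop_op]
    ring
  · intro r
    show (H (algebraMap R S r)).snd = algebraMap R S (δ r)
    rw [hH]; simp

end DerivLoc

theorem derivation_eq_on_fracImage {A K L : Type*} [CommRing A] [Nontrivial A] [Field K] [Field L]
    [Algebra A K] [IsFractionRing A K] (φ : K →+* L)
    (D₁ D₂ : Derivation ℤ L L)
    (h : ∀ a : A, D₁ (φ (algebraMap A K a)) = D₂ (φ (algebraMap A K a))) (k : K) :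
    D₁ (φ k) = D₂ (φ k) := by
  obtain ⟨⟨a, s⟩, hs⟩ := IsLocalization.surj (nonZeroDivisors A) k
  have hs0 : φ (algebraMap A K s) ≠ 0 := by
    have h1 : (s : A) ≠ 0 := nonZeroDivisors.ne_zero s.2
    have h2 : algebraMap A K s ≠ 0 := fun hc => h1 (IsFractionRing.injective A K (by simp [hc]))
    exact fun hc => h2 (φ.injective (by simp [hc]))
  have e : φ k * φ (algebraMap A K s) = φ (algebraMap A K a) := by
    rw [← map_mul, hs]
  have e₁ := congrArg D₁ e
  have e₂ := congrArg D₂ e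
  rw [Derivation.leibniz] at e₁ e₂
  rw [h a, h s] at e₁
  rw [← e₂] at e₁
  simp only [smul_eq_mul] at e₁
  have : φ (algebraMap A K s) * D₁ (φ k) = φ (algebraMap A K s) * D₂ (φ k) := by
    exact add_left_cancel e₁
  exact mul_left_cancel₀ hs0 this


end AuxStatement11

section AuxH


theorem exists_heightOne_prime_of_not_mem {B L : Type*} [CommRing B] [IsDomain B]
    [IsNoetherianRing B] [IsIntegrallyClosed B] [Field L] [Algebra B L] [IsFractionRing B L]
    (z : L) (hz : ∀ d : B, algebraMap B L d ≠ z) :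
    ∃ p : Ideal B, IsHeightOnePrime p ∧
      ∀ c : B, (∃ b' : B, algebraMap B L c * z = algebraMap B L b') → c ∈ p := by
  set αL := algebraMap B L with hαL
  have hinjL : Function.Injective αL := IsFractionRing.injective B L
  obtain ⟨⟨a, b⟩, hab⟩ := IsLocalization.surj (nonZeroDivisors B) z
  have hb0 : (b : B) ≠ 0 := nonZeroDivisors.ne_zero b.2
  have hbL : αL (b : B) ≠ 0 := fun hc => hb0 (hinjL (by rw [hc, map_zero]))
  have ha : a ∉ Ideal.span {(b : B)} := by
    intro hc
    obtain ⟨d, hd⟩ := Ideal.mem_span_singleton.mp hc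
    refine hz d ?_
    have h1 : αL d * αL (b : B) = z * αL (b : B) := by
      rw [hab, hd, map_mul]; ring
    exact mul_right_cancel₀ hbL h1
  set 𝒮 : Set (Ideal B) := {I | (Ideal.span {(b : B)}).colon (Ideal.span {a}) ≤ I ∧
      ∃ c : B, c ∉ Ideal.span {(b : B)} ∧ I = (Ideal.span {(b : B)}).colon (Ideal.span {c})}
    with h𝒮
  have hmaxex : ∃ p : Ideal B, p ∈ 𝒮 ∧ ∀ I ∈ 𝒮, ¬p < I := by
    obtain ⟨p0, hp0, hp0'⟩ :=
      (set_has_maximal_iff_noetherian.mpr ‹IsNoetherianRing B›) 𝒮 ⟨_, le_refl _, a, ha, rfl⟩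
    exact ⟨p0, hp0, hp0'⟩
  obtain ⟨p, hp𝒮, hpmax⟩ := hmaxex
  obtain ⟨hJle, c, hc, hpc⟩ := hp𝒮
  have hmemp : ∀ r : B, r ∈ p ↔ r * c ∈ Ideal.span {(b : B)} := by
    intro r; rw [hpc, Ideal.mem_colon_span_singleton]
  have hprime : p.IsPrime := by
    constructor
    · intro htop
      exact hc (by simpa using (hmemp 1).mp (htop ▸ Submodule.mem_top))
    · intro u v huv
      by_cases hu : u ∈ p
      · exact Or.inl hu
      · refine Or.inr ?_
        have hucb : u * c ∉ Ideal.span {(b : B)} := fun h => hu ((hmemp u).mpr h)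
        have hlep : p ≤ (Ideal.span {(b : B)}).colon (Ideal.span {u * c}) := by
          intro x hx
          rw [Ideal.mem_colon_span_singleton]
          have h1 : x * c ∈ Ideal.span {(b : B)} := (hmemp x).mp hx
          have h2 : x * (u * c) = u * (x * c) := by ring
          rw [h2]
          exact Ideal.mul_mem_left _ _ h1
        have hmem𝒮 : (Ideal.span {(b : B)}).colon (Ideal.span {u * c}) ∈ 𝒮 :=
          ⟨le_trans hJle hlep, u * c, hucb, rfl⟩
        have hpeq : p = (Ideal.span {(b : B)}).colon (Ideal.span {u * c}) :=
          hlep.lt_or_eq.resolve_left (hpmax _ hmem𝒮)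
        have h3 : v ∈ (Ideal.span {(b : B)}).colon (Ideal.span {u * c}) := by
          rw [Ideal.mem_colon_span_singleton]
          have h4 : v * (u * c) = (u * v) * c := by ring
          rw [h4]
          exact (hmemp _).mp huv
        rw [← hpeq] at h3
        exact h3
  have hbp : (b : B) ∈ p :=
    (hmemp b).mpr (Ideal.mem_span_singleton.mpr (Dvd.intro c rfl))
  have hpbot : p ≠ ⊥ := fun h => hb0 (by simpa [h] using hbp)
  have hconc : ∀ c' : B, (∃ b' : B, αL c' * z = αL b') → c' ∈ p := by
    rintro c' ⟨b', hb'⟩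
    refine hJle ?_
    rw [Ideal.mem_colon_span_singleton]
    have h1 : αL (c' * a) = αL (b' * (b : B)) := by
      rw [map_mul, map_mul, ← hab, ← mul_assoc, hb']
    rw [Ideal.mem_span_singleton]
    exact ⟨b', by have := hinjL h1; linear_combination this⟩
  refine ⟨p, ⟨hprime, hpbot, ?_⟩, hconc⟩
  intro q hq hqp
  set W := Localization.AtPrime p with hW
  have hple : p.primeCompl ≤ nonZeroDivisors B := p.primeCompl_le_nonZeroDivisors
  haveI : IsNoetherianRing W := IsLocalization.isNoetherianRing p.primeCompl W inferInstance
  haveI : IsDomain W := IsLocalization.isDomain_localization hple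
  haveI : IsIntegrallyClosed W := isIntegrallyClosed_of_isLocalization W p.primeCompl hple
  have hunit : ∀ s : p.primeCompl, IsUnit (αL s) := by
    rintro ⟨s, hs⟩
    have hs0 : s ≠ 0 := fun h => hs (by rw [h]; exact p.zero_mem)
    exact isUnit_iff_ne_zero.mpr fun h => hs0 (hinjL (by rw [h, map_zero]))
  let g : W →+* L := IsLocalization.lift hunit
  letI : Algebra W L := g.toAlgebra
  haveI : IsScalarTower B W L :=
    IsScalarTower.of_algebraMap_eq fun x => (IsLocalization.lift_eq hunit x).symm
  haveI : IsFractionRing W L :=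
    IsFractionRing.isFractionRing_of_isLocalization p.primeCompl W L hple
  set αW := algebraMap B W with hαW
  set αWL := algebraMap W L with hαWL
  have hinjW : Function.Injective αW := IsLocalization.injective W hple
  have hinjWL : Function.Injective αWL := IsFractionRing.injective W L
  have hcomp : ∀ x : B, αWL (αW x) = αL x :=
    fun x => (IsScalarTower.algebraMap_apply B W L x).symm
  set m := IsLocalRing.maximalIdeal W with hm
  have hmap : Ideal.map αW p = m := Localization.AtPrime.map_eq_maximalIdeal
  set y : L := αL c * (αL (b : B))⁻¹ with hy
  have hyW : ∀ w : W, αWL w ≠ y := by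
    intro w hw
    obtain ⟨⟨d, s⟩, hds⟩ := IsLocalization.surj p.primeCompl w
    have hsL : αL (s : B) ≠ 0 := (hunit s).ne_zero
    have h1 : αWL (w * αW s) = αL d := by rw [hds, hcomp]
    rw [map_mul, hcomp, hw] at h1
    have h2 : αL (c * (s : B)) = αL (d * (b : B)) := by
      rw [map_mul, map_mul, ← h1, hy]
      field_simp
    have h3 : (s : B) ∈ p := by
      rw [hmemp, Ideal.mem_span_singleton]
      exact ⟨d, by have := hinjL h2; linear_combination this⟩
    exact s.2 h3
  have hbnd : ∀ t ∈ m, ∃ w : W, y * αWL t = αWL w := by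
    intro t ht
    rw [← hmap, IsLocalization.mem_map_algebraMap_iff p.primeCompl W] at ht
    obtain ⟨⟨⟨r, hr⟩, s⟩, hrs⟩ := ht
    have hsL : αL (s : B) ≠ 0 := (hunit s).ne_zero
    obtain ⟨e, he⟩ := Ideal.mem_span_singleton.mp ((hmemp r).mp hr)
    refine ⟨IsLocalization.mk' W e s, ?_⟩
    have hne : αL (s : B) * αL (b : B) ≠ 0 := mul_ne_zero hsL hbL
    apply mul_right_cancel₀ hne
    have hts : αWL (t * αW s) = αL r := by rw [hrs, hcomp]
    rw [map_mul, hcomp] at hts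
    have hmk : αWL (IsLocalization.mk' W e s * αW s) = αL e := by
      rw [IsLocalization.mk'_spec, hcomp]
    rw [map_mul, hcomp] at hmk
    calc y * αWL t * (αL (s:B) * αL (b:B))
        = (αWL t * αL (s:B)) * (αL c * (αL (b:B))⁻¹ * αL (b:B)) := by rw [hy]; ring
      _ = αL r * αL c := by rw [hts]; field_simp
      _ = αL (r * c) := by rw [map_mul]
      _ = αWL (IsLocalization.mk' W e s) * (αL (s:B) * αL (b:B)) := by
          rw [he, map_mul, ← hmk]; ring
  by_cases hcase : ∀ t ∈ m, ∃ t' ∈ m, y * αWL t = αWL t'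
  · exfalso
    set N : Submodule W L := Submodule.map (Algebra.linearMap W L) m with hN
    have hNfg : N.FG := (IsNoetherian.noetherian (m : Submodule W W)).map _
    have hNne : N ≠ ⊥ := by
      have hbW : αW (b : B) ∈ m := hmap ▸ Ideal.mem_map_of_mem αW hbp
      have hmem : αL (b : B) ∈ N := ⟨αW (b : B), hbW, hcomp (b : B)⟩
      intro hcon
      rw [hcon, Submodule.mem_bot] at hmem
      exact hbL hmem
    have hint : IsIntegral W y := by
      refine isIntegral_of_smul_mem_submodule N hNne hNfg y ?_
      rintro n ⟨t, ht, rfl⟩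
      obtain ⟨t', ht', he⟩ := hcase t ht
      have h5 : y • (Algebra.linearMap W L) t = αWL t' := by
        simpa [smul_eq_mul] using he
      rw [h5]
      exact ⟨t', ht', rfl⟩
    obtain ⟨w, hw⟩ := IsIntegrallyClosed.isIntegral_iff.mp hint
    exact hyW w hw
  · push_neg at hcase
    obtain ⟨t₀, ht₀, ht₀'⟩ := hcase
    obtain ⟨w₀, hw₀⟩ := hbnd t₀ ht₀
    have hw₀m : w₀ ∉ m := fun hcon => ht₀' w₀ hcon hw₀
    have hw₀u : IsUnit w₀ := by
      by_contra hcon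
      exact hw₀m ((IsLocalRing.mem_maximalIdeal w₀).mpr hcon)
    have hspan : m = Ideal.span {t₀} := by
      apply le_antisymm
      · intro t ht
        obtain ⟨wt, hwt⟩ := hbnd t ht
        have he : w₀ * t = wt * t₀ := by
          apply hinjWL
          rw [map_mul, map_mul, ← hw₀, ← hwt]; ring
        rw [Ideal.mem_span_singleton]
        refine ⟨(hw₀u.unit⁻¹ : Wˣ) * wt, ?_⟩
        have hu1 : ((hw₀u.unit⁻¹ : Wˣ) : W) * w₀ = 1 := hw₀u.val_inv_mul
        calc t = (((hw₀u.unit⁻¹ : Wˣ) : W) * w₀) * t := by rw [hu1, one_mul]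
          _ = ((hw₀u.unit⁻¹ : Wˣ) : W) * (wt * t₀) := by rw [mul_assoc, he]
          _ = t₀ * (((hw₀u.unit⁻¹ : Wˣ) : W) * wt) := by ring
      · rw [Ideal.span_le, Set.singleton_subset_iff]; exact ht₀
    have hdisj : Disjoint (p.primeCompl : Set B) q := by
      rw [Set.disjoint_left]
      intro x hx hxq
      exact hx (hqp.le hxq)
    have hQp : (q.map αW).IsPrime :=
      IsLocalization.isPrime_of_isPrime_disjoint p.primeCompl W q hq hdisj
    have hcomapQ : Ideal.comap αW (q.map αW) = q :=
      IsLocalization.comap_map_of_isPrime_disjoint p.primeCompl W hq hdisj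
    have ht₀Q : t₀ ∉ q.map αW := by
      intro hcon
      have hmq : m ≤ q.map αW := by
        rw [hspan, Ideal.span_le, Set.singleton_subset_iff]; exact hcon
      have hdisjp : Disjoint (p.primeCompl : Set B) p := by
        rw [Set.disjoint_left]; intro x hx hxp; exact hx hxp
      have h1 : Ideal.comap αW (Ideal.map αW p) = p :=
        IsLocalization.comap_map_of_isPrime_disjoint p.primeCompl W hprime hdisjp
      have hpq : p ≤ q := by
        calc p = Ideal.comap αW (Ideal.map αW p) := h1.symm
          _ ≤ Ideal.comap αW (q.map αW) := Ideal.comap_mono (le_trans (le_of_eq hmap) hmq)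
          _ = q := hcomapQ
      exact absurd (lt_of_lt_of_le hqp hpq) (lt_irrefl q)
    have hQle : ∀ n : ℕ, q.map αW ≤ m ^ n := by
      intro n
      induction n with
      | zero => simp
      | succ n ih =>
        intro x hx
        have hxm : x ∈ m := IsLocalRing.le_maximalIdeal hQp.ne_top hx
        rw [hspan, Ideal.mem_span_singleton] at hxm
        obtain ⟨x', hx'⟩ := hxm
        have hx'Q : x' ∈ q.map αW := by
          rcases hQp.mem_or_mem (show t₀ * x' ∈ q.map αW from hx' ▸ hx) with h | h
          · exact absurd h ht₀Q
          · exact h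
        have ht₀m : t₀ ∈ m := ht₀
        rw [hx', mul_comm, pow_succ]
        exact Ideal.mul_mem_mul (ih hx'Q) ht₀m
    have hQbot : q.map αW = ⊥ := by
      have h1 : q.map αW ≤ ⨅ n : ℕ, m ^ n := le_iInf hQle
      rwa [Ideal.iInf_pow_eq_bot_of_isLocalRing m
        (Ideal.IsMaximal.ne_top (IsLocalRing.maximalIdeal.isMaximal W)), le_bot_iff] at h1
    rw [← hcomapQ, hQbot]
    ext x
    simp only [Ideal.mem_comap, Submodule.mem_bot]
    exact ⟨fun h => hinjW (by rw [h, map_zero]), fun h => by rw [h, map_zero]⟩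

end AuxH

/-- Let `B` be a noetherian normal domain and `A` a subring. If
`(Frac A, Frac B) ∈ EXT`, `(A_{fᵢ}, B_{fᵢ}) ∈ EXT` for a family of nonzero `fᵢ ∈ A` no
height-one prime of `B` contains all of, then `(A, B) ∈ EXT`. -/
theorem statement11 {B : Type*} [CommRing B] [IsDomain B] [IsNoetherianRing B]
    [IsIntegrallyClosed B]
    (A : Subring B)
    (K L : Type*) [Field K] [Field L] [Algebra A K] [IsFractionRing A K]
    [Algebra B L] [IsFractionRing B L]
    (φ : K →+* L) (hφ : ∀ a : A, φ (algebraMap A K a) = algebraMap B L (a : B))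
    (hExtFrac : MemEXT φ)
    {I : Type*} (f : I → A) (hf0 : ∀ i, f i ≠ 0)
    (hExtLoc : ∀ i : I, MemEXT (Localization.awayMap A.subtype (f i)))
    (hht : ∀ p : Ideal B, IsHeightOnePrime p → ∃ i, ((f i : B)) ∉ p) :
    MemEXT A.subtype := by
  intro δ
  have hinjL : Function.Injective (algebraMap B L) := IsFractionRing.injective B L
  obtain ⟨δK, hδK⟩ := exists_derivation_localization K (nonZeroDivisors A) δ
  obtain ⟨D, hD, hDuniq⟩ := hExtFrac δK
  have hDA : ∀ a : A, D (algebraMap B L (a : B)) = algebraMap B L ((δ a : A) : B) := by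
    intro a
    rw [← hφ a, hD (algebraMap A K a), hδK a, hφ (δ a)]
  have hkey : ∀ E : Derivation ℤ L L,
      (∀ a : A, E (algebraMap B L (a : B)) = algebraMap B L ((δ a : A) : B)) → E = D := by
    intro E hE
    apply hDuniq
    intro k
    have h1 := derivation_eq_on_fracImage (A := A) φ E D
      (fun a => by rw [hφ a, hE a, hDA a]) k
    rw [h1, hD k]
  -- local step
  have hloc : ∀ (i : I) (b : B), ∃ (n : ℕ) (b' : B),
      D (algebraMap B L b) * algebraMap B L (((f i : A) : B) ^ n) = algebraMap B L b' := by
    intro i b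
    show ∃ (n : ℕ) (b' : B),
      D (algebraMap B L b) * algebraMap B L ((A.subtype (f i)) ^ n) = algebraMap B L b'
    have hgB0 : ((f i : A) : B) ≠ 0 := fun h => hf0 i (Subtype.ext h)
    obtain ⟨δi, hδi⟩ := exists_derivation_localization (Localization.Away (f i))
      (Submonoid.powers (f i)) δ
    obtain ⟨Di, hDi, -⟩ := hExtLoc i δi
    set Li := Localization.Away (A.subtype (f i)) with hLi
    have hpow_le : Submonoid.powers (A.subtype (f i)) ≤ nonZeroDivisors B :=
      powers_le_nonZeroDivisors_of_noZeroDivisors hgB0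
    have hgL : ∀ s : Submonoid.powers (A.subtype (f i)), IsUnit (algebraMap B L s) := by
      rintro ⟨s, n, hn⟩
      have hs0 : s ≠ 0 := by
        rw [← hn]; exact pow_ne_zero n hgB0
      exact isUnit_iff_ne_zero.mpr fun h => hs0 (hinjL (by rw [h, map_zero]))
    let ρ : Li →+* L := IsLocalization.lift hgL
    letI : Algebra Li L := ρ.toAlgebra
    haveI : IsScalarTower B Li L :=
      IsScalarTower.of_algebraMap_eq fun x => (IsLocalization.lift_eq hgL x).symm
    haveI : IsDomain Li := IsLocalization.isDomain_localization hpow_le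
    haveI : IsFractionRing Li L :=
      IsFractionRing.isFractionRing_of_isLocalization
        (Submonoid.powers (A.subtype (f i))) Li L hpow_le
    have hρ : algebraMap Li L = ρ := rfl
    have hcomp : ∀ x : B, algebraMap Li L (algebraMap B Li x) = algebraMap B L x :=
      fun x => (IsScalarTower.algebraMap_apply B Li L x).symm
    obtain ⟨Ei, hEi⟩ := exists_derivation_localization L (nonZeroDivisors Li) Di
    have hAway : ∀ a : A, Localization.awayMap A.subtype (f i)
        (algebraMap A (Localization.Away (f i)) a) = algebraMap B Li ((a : A) : B) := by
      intro a
      exact IsLocalization.map_eq _ _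
    have hEiA : ∀ a : A, Ei (algebraMap B L (a : B)) = algebraMap B L ((δ a : A) : B) := by
      intro a
      rw [← hcomp (a : B), hEi, ← hAway a, hDi, hδi, hAway (δ a), hcomp]
    have hED : Ei = D := hkey Ei hEiA
    set x : Li := Di (algebraMap B Li b) with hx
    obtain ⟨⟨x', s⟩, hs⟩ := IsLocalization.surj (Submonoid.powers (A.subtype (f i))) x
    obtain ⟨n, hn⟩ := s.2
    have hn' : (A.subtype (f i)) ^ n = (s : B) := hn
    refine ⟨n, x', ?_⟩
    have h2 : D (algebraMap B L b) = algebraMap Li L x := by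
      rw [← hED, ← hcomp b, hEi, hx]
    rw [h2, hn', ← hcomp ((s : B)), ← map_mul]
    calc algebraMap Li L (x * algebraMap B Li (s : B))
        = algebraMap Li L (algebraMap B Li x') := by rw [hs]
      _ = algebraMap B L x' := hcomp x'
  -- global step
  have hglob : ∀ b : B, ∃ b' : B, algebraMap B L b' = D (algebraMap B L b) := by
    intro b
    by_contra hno
    push_neg at hno
    obtain ⟨p, hp1, hp2⟩ := exists_heightOne_prime_of_not_mem (D (algebraMap B L b)) hno
    obtain ⟨i, hi⟩ := hht p hp1
    obtain ⟨n, b', hnb⟩ := hloc i b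
    have hmem : ((f i : A) : B) ^ n ∈ p := by
      refine hp2 _ ⟨b', ?_⟩
      rw [mul_comm]
      exact hnb
    exact hi (hp1.1.mem_of_pow_mem n hmem)
  choose Dfun hDfun using hglob
  have hadd : ∀ x y : B, Dfun (x + y) = Dfun x + Dfun y := by
    intro x y
    apply hinjL
    rw [map_add, hDfun, hDfun, hDfun, map_add, map_add]
  have hzero : Dfun 0 = 0 := by
    apply hinjL
    rw [hDfun]; simp
  let Dadd : B →+ B := { toFun := Dfun, map_zero' := hzero, map_add' := hadd }
  have hone : Dadd 1 = 0 := by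
    apply hinjL
    show algebraMap B L (Dfun 1) = _
    rw [hDfun, map_one, Derivation.map_one_eq_zero, map_zero]
  have hleib : ∀ x y : B, Dadd (x * y) = x • Dadd y + y • Dadd x := by
    intro x y
    apply hinjL
    show algebraMap B L (Dfun (x * y)) = algebraMap B L (x • Dfun y + y • Dfun x)
    rw [hDfun, map_mul, Derivation.leibniz]
    simp only [smul_eq_mul, map_add, map_mul, hDfun]
  let DB : Derivation ℤ B B :=
    { toLinearMap := Dadd.toIntLinearMap
      map_one_eq_zero' := hone
      leibniz' := hleib }
  have hDBfun : ∀ b : B, DB b = Dfun b := fun b => rfl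
  refine ⟨DB, ?_, ?_⟩
  · intro a
    apply hinjL
    rw [hDBfun, hDfun]
    exact hDA a
  · intro D' hD'
    obtain ⟨E', hE'⟩ := exists_derivation_localization L (nonZeroDivisors B) D'
    have hE'A : ∀ a : A, E' (algebraMap B L (a : B)) = algebraMap B L ((δ a : A) : B) := by
      intro a
      rw [hE' (a : B)]
      exact congrArg _ (hD' a)
    have hE'D : E' = D := hkey E' hE'A
    apply Derivation.ext
    intro b
    apply hinjL
    rw [hDBfun, hDfun, ← hE'D, hE' b]
end

section
/- Let A be a commutative ring, A[X] = A[X_1, …, X_n] a polynomial ring in n variables, f_1, …, f_n ∈ A[X], B = A[X]/(f_1, …, f_n), and π : A[X] → B the canonical quotient homomorphism. Let P ∈ A[X] be the determinant of the Jacobian matrix (∂f_i/∂X_j). If π(P) is a unit of B, then (A, B) ∈ EXT, i.e., every derivation δ : A → A extends uniquely to a derivation D : B → B. -/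
open MvPolynomial

namespace St12
variable {A : Type*} [CommRing A] {n : ℕ}

noncomputable def coeffFun (δ : Derivation ℤ A A) (p : MvPolynomial (Fin n) A) :
    MvPolynomial (Fin n) A :=
  AddMonoidAlgebra.ofCoeff (Finsupp.mapRange (⇑δ) (map_zero δ) (AddMonoidAlgebra.coeff p))

theorem coeff_coeffFun (δ : Derivation ℤ A A) (p : MvPolynomial (Fin n) A) (m) :
    coeff m (coeffFun δ p) = δ (coeff m p) :=
  Finsupp.mapRange_apply (hf := map_zero δ)

theorem coeffFun_mul (δ : Derivation ℤ A A) (p q : MvPolynomial (Fin n) A) :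
    coeffFun δ (p * q) = p * coeffFun δ q + coeffFun δ p * q := by
  ext m
  rw [coeff_add, coeff_coeffFun, coeff_mul, map_sum, coeff_mul, coeff_mul,
    ← Finset.sum_add_distrib]
  refine Finset.sum_congr rfl fun x _ => ?_
  rw [coeff_coeffFun, coeff_coeffFun, Derivation.leibniz, smul_eq_mul, smul_eq_mul]
  ring

/-- Coefficientwise application of a derivation `δ : A → A` to a multivariate polynomial,
as a `ℤ`-derivation of `A[X₁,…,Xₙ]`. -/
noncomputable def coeffDeriv (δ : Derivation ℤ A A) :
    Derivation ℤ (MvPolynomial (Fin n) A) (MvPolynomial (Fin n) A) where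
  toLinearMap :=
    { toFun := coeffFun δ
      map_add' := fun p q => by
        ext m
        rw [coeff_coeffFun, coeff_add, coeff_add, coeff_coeffFun, coeff_coeffFun, map_add]
      map_smul' := fun z p => by
        ext m
        rw [RingHom.id_apply, coeff_coeffFun, MvPolynomial.coeff_smul,
          MvPolynomial.coeff_smul, coeff_coeffFun]
        exact δ.toLinearMap.map_smul z _ }
  map_one_eq_zero' := by
    ext m
    show coeff m (coeffFun δ 1) = coeff m 0
    rw [coeff_coeffFun, coeff_one, coeff_zero, apply_ite (⇑δ), map_zero, Derivation.map_one_eq_zero,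
      ite_self]
  leibniz' := fun p q => by
    show coeffFun δ (p * q) = p • coeffFun δ q + q • coeffFun δ p
    rw [smul_eq_mul, smul_eq_mul, coeffFun_mul]
    ring

theorem coeffDeriv_apply (δ : Derivation ℤ A A) (p : MvPolynomial (Fin n) A) :
    coeffDeriv δ p = coeffFun δ p := rfl

theorem coeffDeriv_C (δ : Derivation ℤ A A) (a : A) :
    coeffDeriv δ (C a : MvPolynomial (Fin n) A) = C (δ a) := by
  ext m
  rw [coeffDeriv_apply, coeff_coeffFun, coeff_C, coeff_C, apply_ite (⇑δ), map_zero]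

/-- The derivation of `A[X₁,…,Xₙ]` extending `δ` and sending `Xⱼ` to `g j`. -/
noncomputable def extDeriv (δ : Derivation ℤ A A) (g : Fin n → MvPolynomial (Fin n) A) :
    Derivation ℤ (MvPolynomial (Fin n) A) (MvPolynomial (Fin n) A) :=
  coeffDeriv δ + ∑ j, g j • ((pderiv j).restrictScalars ℤ)

theorem extDeriv_apply (δ : Derivation ℤ A A) (g : Fin n → MvPolynomial (Fin n) A)
    (p : MvPolynomial (Fin n) A) :
    extDeriv δ g p = coeffDeriv δ p + ∑ j, g j * pderiv j p := by
  rw [extDeriv, Derivation.add_apply]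
  congr 1
  rw [show (⇑(∑ j : Fin n, g j • (pderiv j).restrictScalars ℤ) :
        MvPolynomial (Fin n) A → MvPolynomial (Fin n) A)
      = ∑ j : Fin n, ⇑(g j • (pderiv j).restrictScalars ℤ) from
      map_sum Derivation.coeFnAddMonoidHom _ _, Finset.sum_apply]
  exact Finset.sum_congr rfl fun j _ => by
    rw [Derivation.smul_apply, Derivation.restrictScalars_apply, smul_eq_mul]

theorem extDeriv_C (δ : Derivation ℤ A A) (g : Fin n → MvPolynomial (Fin n) A) (a : A) :
    extDeriv δ g (C a) = C (δ a) := by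
  simp [extDeriv_apply, coeffDeriv_C, pderiv_C]

/-- A derivation preserving an ideal descends to the quotient: the underlying linear map. -/
noncomputable def quotLin {R : Type*} [CommRing R] (I : Ideal R) (D : Derivation ℤ R R)
    (h : ∀ x ∈ I, D x ∈ I) : (R ⧸ I) →ₗ[ℤ] (R ⧸ I) :=
  (Submodule.Quotient.restrictScalarsEquiv ℤ I).toLinearMap ∘ₗ
    (Submodule.mapQ (I.restrictScalars ℤ) (I.restrictScalars ℤ)
      (D.toLinearMap) (fun x hx => h x hx)) ∘ₗ
    (Submodule.Quotient.restrictScalarsEquiv ℤ I).symm.toLinearMap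

theorem quotLin_mk {R : Type*} [CommRing R] (I : Ideal R) (D : Derivation ℤ R R)
    (h : ∀ x ∈ I, D x ∈ I) (r : R) :
    quotLin I D h (Ideal.Quotient.mk I r) = Ideal.Quotient.mk I (D r) := rfl

/-- `ℤ`-derivations of `B`, with the instances coming from `CommRing B`. -/
abbrev DerivR (B : Type*) [CommRing B] := Derivation ℤ B B

/-- A derivation preserving an ideal descends to the quotient. -/
noncomputable def quotDeriv {R : Type*} [CommRing R] (I : Ideal R) (D : Derivation ℤ R R)
    (h : ∀ x ∈ I, D x ∈ I) : DerivR (R ⧸ I) where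
  toLinearMap := quotLin I D h
  map_one_eq_zero' := by
    have : (1 : R ⧸ I) = Ideal.Quotient.mk I 1 := (map_one _).symm
    rw [this, quotLin_mk, Derivation.map_one_eq_zero, map_zero]
  leibniz' := fun x y => by
    obtain ⟨r, rfl⟩ := Ideal.Quotient.mk_surjective x
    obtain ⟨s, rfl⟩ := Ideal.Quotient.mk_surjective y
    rw [← map_mul, quotLin_mk, quotLin_mk, quotLin_mk, Derivation.leibniz, map_add,
      smul_eq_mul, smul_eq_mul, smul_eq_mul, smul_eq_mul, map_mul, map_mul]

theorem quotDeriv_mk {R : Type*} [CommRing R] (I : Ideal R) (D : Derivation ℤ R R)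
    (h : ∀ x ∈ I, D x ∈ I) (r : R) :
    quotDeriv I D h (Ideal.Quotient.mk I r) = Ideal.Quotient.mk I (D r) :=
  quotLin_mk I D h r

/-- Chain rule: a derivation of the quotient killing the constants is computed on `mk p`
from its values on the variables. -/
theorem chainFormula (I : Ideal (MvPolynomial (Fin n) A))
    (E : DerivR (MvPolynomial (Fin n) A ⧸ I))
    (hC : ∀ a : A, E (Ideal.Quotient.mk I (C a)) = 0)
    (p : MvPolynomial (Fin n) A) :
    E (Ideal.Quotient.mk I p) =
      ∑ j, Ideal.Quotient.mk I (pderiv j p) * E (Ideal.Quotient.mk I (X j)) := by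
  classical
  induction p using MvPolynomial.induction_on with
  | C a => simp [hC]
  | add p q hp hq =>
      rw [map_add, map_add, hp, hq, ← Finset.sum_add_distrib]
      refine Finset.sum_congr rfl fun j _ => ?_
      rw [map_add, map_add, add_mul]
  | mul_X p i hp =>
      have hR : ∀ j : Fin n,
          Ideal.Quotient.mk I (pderiv j (p * X i)) * E (Ideal.Quotient.mk I (X j))
          = Ideal.Quotient.mk I (pderiv j p) * E (Ideal.Quotient.mk I (X j)) *
              Ideal.Quotient.mk I (X i)
            + (if j = i then Ideal.Quotient.mk I p * E (Ideal.Quotient.mk I (X j)) else 0) := by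
        intro j
        rw [pderiv_mul]
        by_cases h : j = i
        · subst h
          rw [pderiv_X_self, if_pos rfl]
          simp only [map_add, map_mul, map_one, mul_one]
          ring
        · rw [pderiv_X_of_ne fun hh => h hh.symm, if_neg h, mul_zero, add_zero, map_mul]
          ring
      rw [Finset.sum_congr rfl fun j _ => hR j, Finset.sum_add_distrib, ← Finset.sum_mul,
        Finset.sum_ite_eq' Finset.univ i, if_pos (Finset.mem_univ i), map_mul, E.leibniz,
        smul_eq_mul, smul_eq_mul, hp]
      ring

end St12

/-- Let `A` be a commutative ring, `B = A[X₁,…,Xₙ]/(f₁,…,fₙ)` and `π` the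
quotient map. If the image under `π` of the Jacobian determinant `det(∂fᵢ/∂Xⱼ)` is a unit of
`B`, then `(A, B) ∈ EXT`. -/
theorem statement12 {A : Type*} [CommRing A] (n : ℕ)
    (f : Fin n → MvPolynomial (Fin n) A)
    (hP : IsUnit (Ideal.Quotient.mk (Ideal.span (Set.range f))
      ((Matrix.of fun i j : Fin n => MvPolynomial.pderiv j (f i)).det))) :
    MemEXT ((Ideal.Quotient.mk (Ideal.span (Set.range f))).comp
      (MvPolynomial.C : A →+* MvPolynomial (Fin n) A)) := by
  classical
  intro δ
  set I : Ideal (MvPolynomial (Fin n) A) := Ideal.span (Set.range f) with hI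
  set M : Matrix (Fin n) (Fin n) (MvPolynomial (Fin n) A ⧸ I) :=
    (Matrix.of fun i j : Fin n => MvPolynomial.pderiv j (f i)).map (Ideal.Quotient.mk I) with hM
  have hdet : IsUnit M.det := by
    rw [hM, ← RingHom.mapMatrix_apply, ← RingHom.map_det]; exact hP
  set v : Fin n → MvPolynomial (Fin n) A ⧸ I := fun i => Ideal.Quotient.mk I (St12.coeffDeriv δ (f i)) with hv
  set b : Fin n → MvPolynomial (Fin n) A ⧸ I := fun j => -(M⁻¹.mulVec v j) with hb
  choose g hg using fun j => Ideal.Quotient.mk_surjective (b j)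
  set D1 := St12.extDeriv δ g with hD1
  have hfi : ∀ i, D1 (f i) ∈ I := by
    intro i
    rw [← Ideal.Quotient.eq_zero_iff_mem]
    have h1 : Ideal.Quotient.mk I (D1 (f i)) = v i + M.mulVec b i := by
      rw [hD1, St12.extDeriv_apply, map_add, map_sum]
      congr 1
      rw [show M.mulVec b i = ∑ j, M i j * b j from rfl]
      refine Finset.sum_congr rfl fun j _ => ?_
      rw [map_mul, hg j, hM]
      simp [Matrix.map_apply, mul_comm]
    have h2 : M.mulVec b = -v := by
      rw [hb]
      show M.mulVec (-(M⁻¹.mulVec v)) = -v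
      rw [Matrix.mulVec_neg, Matrix.mulVec_mulVec, Matrix.mul_nonsing_inv _ hdet,
        Matrix.one_mulVec]
    rw [h1, h2]
    simp
  have hIs : ∀ x ∈ I, D1 x ∈ I := by
    intro x hx
    refine Submodule.span_induction ?_ ?_ ?_ ?_ hx
    · rintro x ⟨i, rfl⟩; exact hfi i
    · simpa using I.zero_mem
    · intro x y _ _ hx' hy'; simpa using I.add_mem hx' hy'
    · intro r x hx' hD
      rw [smul_eq_mul, D1.leibniz, smul_eq_mul, smul_eq_mul]
      exact I.add_mem (I.mul_mem_left r hD) (I.mul_mem_right _ hx')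
  set DQ := St12.quotDeriv I D1 hIs with hDQ
  have hprop : ∀ a : A, DQ (Ideal.Quotient.mk I (MvPolynomial.C a))
      = Ideal.Quotient.mk I (MvPolynomial.C (δ a)) := by
    intro a
    rw [hDQ]; exact (St12.quotDeriv_mk I D1 hIs (C a)).trans (congrArg _ (St12.extDeriv_C δ g a))
  refine ⟨DQ, fun a => ?_, ?_⟩
  · rw [RingHom.comp_apply, RingHom.comp_apply]; exact hprop a
  intro D' hD'
  have hE : ∀ a : A, (D' - DQ) (Ideal.Quotient.mk I (MvPolynomial.C a)) = 0 := by
    intro a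
    have h7 := hD' a
    rw [RingHom.comp_apply, RingHom.comp_apply] at h7
    rw [Derivation.sub_apply, h7, hprop a, sub_self]
  have hd : ∀ j : Fin n, (D' - DQ) (Ideal.Quotient.mk I (MvPolynomial.X j)) = 0 := by
    set d : Fin n → MvPolynomial (Fin n) A ⧸ I :=
      fun j => (D' - DQ) (Ideal.Quotient.mk I (MvPolynomial.X j)) with hdd
    have h0 : M.mulVec d = 0 := by
      funext i
      have h1 : Ideal.Quotient.mk I (f i) = 0 :=
        Ideal.Quotient.eq_zero_iff_mem.mpr (Ideal.subset_span ⟨i, rfl⟩)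
      have h2 := St12.chainFormula I (D' - DQ) hE (f i)
      rw [h1, map_zero] at h2
      have h3 : M.mulVec d i
          = ∑ j, Ideal.Quotient.mk I (MvPolynomial.pderiv j (f i)) * d j := rfl
      rw [Pi.zero_apply, h3]
      exact h2.symm
    have h4 : d = 0 := by
      have h5 := congrArg M⁻¹.mulVec h0
      rwa [Matrix.mulVec_mulVec, Matrix.nonsing_inv_mul _ hdet, Matrix.one_mulVec,
        Matrix.mulVec_zero] at h5
    intro j
    exact congrFun h4 j
  ext x
  obtain ⟨p, rfl⟩ := Ideal.Quotient.mk_surjective x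
  have h6 := St12.chainFormula I (D' - DQ) hE p
  simp only [hd, mul_zero, Finset.sum_const_zero, Derivation.sub_apply] at h6
  exact sub_eq_zero.mp h6
end

section
/- Let G be an abelian group, B = ⊕_{i∈G} B_i a G-graded commutative ring, and R a subring of B_0. If B is finitely generated as an R-algebra, then for every subgroup H of G the graded subring B^{(H)} = ⊕_{i∈H} B_i is finitely generated as an R-algebra. -/
/-- Let `G` be an abelian group, `B` a `G`-graded ring, `R` a subring of
`B₀`. If `B` is a finitely generated `R`-algebra, then so is `B^{(H)} = ⊕_{i∈H} B_i` for
every subgroup `H` of `G`. -/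
theorem statement13 {G B : Type*} [AddCommGroup G] [DecidableEq G] [CommRing B]
    (𝒜 : G → AddSubgroup B) [GradedRing 𝒜]
    (R : Subring B) (hR : (R : Set B) ⊆ (𝒜 0 : Set B))
    (hfg : ∃ s : Finset B, Subring.closure ((R : Set B) ∪ (s : Set B)) = ⊤)
    (H : AddSubgroup G) :
    ∃ t : Finset B,
      (t : Set B) ⊆ (Subring.closure (⋃ i ∈ H, (𝒜 i : Set B)) : Set B) ∧
      Subring.closure ((R : Set B) ∪ (t : Set B)) =
        Subring.closure (⋃ i ∈ H, (𝒜 i : Set B)) := by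

  classical
  obtain ⟨s, hs⟩ := hfg
  -- replace the generators by their homogeneous components
  set s' : Finset B := s.biUnion (fun b =>
    (DirectSum.decompose 𝒜 b).support.image
      (fun i => ((DirectSum.decompose 𝒜 b) i : B))) with hs'def
  have hs'hom : ∀ y ∈ s', ∃ i : G, y ∈ 𝒜 i := by
    intro y hy
    rw [hs'def, Finset.mem_biUnion] at hy
    obtain ⟨b, -, hy⟩ := hy
    rw [Finset.mem_image] at hy
    obtain ⟨i, -, rfl⟩ := hy
    exact ⟨i, SetLike.coe_mem _⟩
  have htop : Subring.closure ((R : Set B) ∪ (s' : Set B)) = ⊤ := by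
    rw [eq_top_iff, ← hs]
    refine Subring.closure_le.2 ?_
    rintro z (hz | hz)
    · exact Subring.subset_closure (Or.inl hz)
    · rw [SetLike.mem_coe, ← DirectSum.sum_support_decompose 𝒜 z]
      refine sum_mem fun i hi => Subring.subset_closure (Or.inr ?_)
      rw [Finset.mem_coe, hs'def, Finset.mem_biUnion]
      exact ⟨z, hz, Finset.mem_image.2 ⟨i, hi, rfl⟩⟩
  -- degrees of the homogeneous generators
  have hdeg' : ∀ j : {y : B // y ∈ s'}, ∃ i : G, (j : B) ∈ 𝒜 i := fun j => hs'hom j j.2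
  choose deg hdeg using hdeg'
  -- monomials and their degrees
  set m : ({y : B // y ∈ s'} → ℕ) → B := fun e => ∏ j : {y : B // y ∈ s'}, (j : B) ^ e j with hmdef
  set σf : ({y : B // y ∈ s'} → ℕ) → G := fun e => ∑ j, e j • deg j with hσdef
  have hm : ∀ e, m e ∈ 𝒜 (σf e) := fun e =>
    SetLike.prod_pow_mem_graded 𝒜 deg _ e (fun j _ => hdeg j)
  have hm0 : m 0 = 1 := by simp [hmdef]
  have hmadd : ∀ e f : {y : B // y ∈ s'} → ℕ, m (e + f) = m e * m f := by
    intro e f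
    simp only [hmdef, Pi.add_apply, pow_add, Finset.prod_mul_distrib]
  have hσadd : ∀ e f : {y : B // y ∈ s'} → ℕ, σf (e + f) = σf e + σf f := by
    intro e f
    simp only [hσdef, Pi.add_apply, add_nsmul, Finset.sum_add_distrib]
  -- the finite set of minimal exponent vectors
  set A : Set ({y : B // y ∈ s'} → ℕ) :=
    {f | σf f ∈ H ∧ f ≠ 0 ∧ ∀ g, σf g ∈ H → g ≠ 0 → g ≤ f → g = f} with hAdef
  have hA_anti : IsAntichain (· ≤ ·) A := by
    rintro f ⟨hf1, hf2, hf3⟩ g ⟨hg1, hg2, hg3⟩ hne hle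
    exact hne (hg3 f hf1 hf2 hle)
  have hAfin : A.Finite := hA_anti.finite_of_partiallyWellOrderedOn
    (Set.isPWO_of_wellQuasiOrderedLE A)
  refine ⟨hAfin.toFinset.image m, ?_, ?_⟩
  · -- the monomials are homogeneous of degree in H
    intro z hz
    rw [Finset.coe_image, Set.mem_image] at hz
    obtain ⟨f, hf, rfl⟩ := hz
    rw [Set.Finite.coe_toFinset] at hf
    exact Subring.subset_closure (Set.mem_biUnion hf.1 (hm f))
  set D : Subring B :=
    Subring.closure ((R : Set B) ∪ ((hAfin.toFinset.image m : Finset B) : Set B)) with hDdef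
  -- every monomial of degree in H lies in D
  have key : ∀ N (e : {y : B // y ∈ s'} → ℕ), (∑ j, e j) = N → σf e ∈ H → m e ∈ D := by
    intro N
    induction N using Nat.strong_induction_on with
    | _ N ih =>
      intro e hN hσ
      by_cases he : e = 0
      · rw [he, hm0]; exact one_mem D
      · -- choose f of minimal total degree among nonzero elements below e with degree in H
        have hTne : ((fun g => ∑ j, g j) ''
            {g | σf g ∈ H ∧ g ≠ 0 ∧ g ≤ e}).Nonempty := ⟨N, e, ⟨hσ, he, le_refl e⟩, hN⟩
        obtain ⟨k, ⟨f, hfT, hfk⟩, hkmin⟩ := Nat.lt_wfRel.wf.has_min _ hTne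
        have hfsum : ∀ g, σf g ∈ H → g ≠ 0 → g ≤ e → ∑ j, f j ≤ ∑ j, g j := by
          intro g h1 h2 h3
          have hfk' : (∑ j, f j) = k := hfk
          rw [hfk']
          exact not_lt.1 (hkmin _ ⟨g, ⟨h1, h2, h3⟩, rfl⟩)
        have hfe : f ≤ e := hfT.2.2
        have hfA : f ∈ A := by
          refine ⟨hfT.1, hfT.2.1, ?_⟩
          intro g hg1 hg2 hle
          by_contra hne
          have hlt : ∑ j, g j < ∑ j, f j := by
            obtain ⟨j, hj⟩ : ∃ j, g j ≠ f j := Function.ne_iff.1 hne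
            exact Finset.sum_lt_sum (fun j _ => hle j)
              ⟨j, Finset.mem_univ j, lt_of_le_of_ne (hle j) hj⟩
          exact absurd (hfsum g hg1 hg2 (le_trans hle hfe)) (not_le.2 hlt)
        have hsplit : f + (e - f) = e := by
          funext j
          exact Nat.add_sub_cancel' (hfe j)
        have hσef : σf (e - f) ∈ H := by
          have h1 : σf f + σf (e - f) = σf e := by rw [← hσadd, hsplit]
          have h2 : σf (e - f) = σf e - σf f := by rw [← h1]; abel
          rw [h2]
          exact H.sub_mem hσ hfT.1
        have hfpos : 0 < ∑ j, f j := by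
          rcases Function.ne_iff.1 hfT.2.1 with ⟨j, hj⟩
          exact Finset.sum_pos' (fun j _ => Nat.zero_le _)
            ⟨j, Finset.mem_univ j, Nat.pos_of_ne_zero hj⟩
        have hsum : (∑ j, (e - f) j) + ∑ j, f j = N := by
          rw [← Finset.sum_add_distrib, ← hN]
          exact Finset.sum_congr rfl (fun j _ => Nat.sub_add_cancel (hfe j))
        have hlt : (∑ j, (e - f) j) < N := by
          rw [← hsum]; exact Nat.lt_add_of_pos_right hfpos
        have h1 : m (e - f) ∈ D := ih _ hlt _ rfl hσef
        have h2 : m f ∈ D := by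
          refine Subring.subset_closure (Or.inr ?_)
          rw [Finset.mem_coe, Finset.mem_image]
          exact ⟨f, hAfin.mem_toFinset.2 hfA, rfl⟩
        have hme : m e = m f * m (e - f) := by rw [← hmadd, hsplit]
        rw [hme]
        exact mul_mem h2 h1
  -- every element of the multiplicative closure of R ∪ s' is r * monomial
  have hmono : ∀ z ∈ Submonoid.closure ((R : Set B) ∪ (s' : Set B)),
      ∃ r ∈ R, ∃ e : {y : B // y ∈ s'} → ℕ, z = r * m e := by
    intro z hz
    induction hz using Submonoid.closure_induction with
    | mem z hz =>
      rcases hz with hz | hz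
      · exact ⟨z, hz, 0, by rw [hm0, mul_one]⟩
      · refine ⟨1, one_mem R, Pi.single ⟨z, hz⟩ 1, ?_⟩
        rw [one_mul]
        simp only [hmdef]
        rw [Fintype.prod_eq_single (⟨z, hz⟩ : {y : B // y ∈ s'})
          (fun j hj => by rw [Pi.single_eq_of_ne hj, pow_zero])]
        simp
    | one => exact ⟨1, one_mem R, 0, by rw [hm0, mul_one]⟩
    | mul a b ha' hb' ha hb =>
      obtain ⟨r, hr, e, rfl⟩ := ha
      obtain ⟨r', hr', e', rfl⟩ := hb
      exact ⟨r * r', mul_mem hr hr', e + e', by rw [hmadd]; ring⟩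
  -- the main inclusion
  have hCD : ∀ i ∈ H, ∀ b ∈ 𝒜 i, b ∈ D := by
    intro i hi b hb
    have hbmem : b ∈ Subring.closure ((R : Set B) ∪ (s' : Set B)) := by
      rw [htop]; exact Subring.mem_top b
    rw [Subring.mem_closure_iff] at hbmem
    have hproj : ∀ y, y ∈ AddSubgroup.closure
        ((Submonoid.closure ((R : Set B) ∪ (s' : Set B)) : Submonoid B) : Set B) →
        GradedRing.proj 𝒜 i y ∈ D := by
      intro y hy
      induction hy using AddSubgroup.closure_induction with
      | mem z hz =>
        obtain ⟨r, hr, e, rfl⟩ := hmono z hz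
        have hzdeg : r * m e ∈ 𝒜 (σf e) := by
          have h := SetLike.mul_mem_graded (hR hr) (hm e)
          rwa [zero_add] at h
        by_cases hie : σf e = i
        · rw [GradedRing.proj_apply, DirectSum.decompose_of_mem_same 𝒜 (hie ▸ hzdeg)]
          exact mul_mem (Subring.subset_closure (Or.inl hr))
            (key _ e rfl (by rw [hie]; exact hi))
        · rw [GradedRing.proj_apply, DirectSum.decompose_of_mem_ne 𝒜 hzdeg hie]
          exact zero_mem D
      | zero => rw [map_zero]; exact zero_mem D
      | add x y hx' hy' hx hy => rw [map_add]; exact add_mem hx hy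
      | neg x hx' hx => rw [map_neg]; exact neg_mem hx
    have hproj' := hproj b hbmem
    rwa [GradedRing.proj_apply, DirectSum.decompose_of_mem_same 𝒜 hb] at hproj'
  refine le_antisymm ?_ ?_
  · refine Subring.closure_le.2 ?_
    rintro z (hz | hz)
    · exact Subring.subset_closure (Set.mem_biUnion H.zero_mem (hR hz))
    · rw [Finset.mem_coe, Finset.mem_image] at hz
      obtain ⟨f, hf, rfl⟩ := hz
      rw [Set.Finite.mem_toFinset] at hf
      exact Subring.subset_closure (Set.mem_biUnion hf.1 (hm f))
  · refine Subring.closure_le.2 ?_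
    intro z hz
    rw [Set.mem_iUnion₂] at hz
    obtain ⟨i, hi, hzi⟩ := hz
    exact hCD i hi z hzi
end

section
/- Let G be a torsion-free abelian group and R = ⊕_{i∈G} R_i a G-graded integral domain which is finitely generated as an algebra over a field of characteristic zero. If R is non-rigid, then there exists a nonzero homogeneous locally nilpotent derivation D : R → R. -/
universe u

lemma exists_ordered_embedding {G : Type u} [AddCommGroup G]
    (htf : ∀ (g : G) (n : ℕ), 0 < n → n • g = 0 → g = 0) :
    ∃ (L : Type u) (_ : AddCommGroup L) (_ : LinearOrder L) (_ : IsOrderedAddMonoid L) (φ : G →+ L), Function.Injective φ := by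
  classical
  let V := LocalizedModule (nonZeroDivisors ℤ) G
  let K := FractionRing ℤ
  let f : G → V := fun g => LocalizedModule.mk g 1
  have hfadd : ∀ x y, f (x + y) = f x + f y := by
    intro x y
    show LocalizedModule.mk (x+y) 1 = LocalizedModule.mk x 1 + LocalizedModule.mk y 1
    rw [LocalizedModule.mk_add_mk]
    simp
  have hf : Function.Injective f := by
    have hker : ∀ z, f z = 0 → z = 0 := by
      intro z hz
      have h0 : LocalizedModule.mk z (1 : nonZeroDivisors ℤ)
          = LocalizedModule.mk 0 (1 : nonZeroDivisors ℤ) := by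
        simpa [LocalizedModule.zero_mk] using hz
      rw [LocalizedModule.mk_eq] at h0
      obtain ⟨u, hu⟩ := h0
      simp only [one_smul, smul_zero] at hu
      have hu' : (u : ℤ) • z = 0 := hu
      have h2 : ((u : ℤ).natAbs : ℤ) • z = 0 := by
        rcases Int.natAbs_eq (u : ℤ) with he | he
        · rw [← he]; exact hu'
        · rw [← neg_neg (((u : ℤ).natAbs : ℤ)), ← he, neg_smul, hu', neg_zero]
      have hs0 : 0 < (u : ℤ).natAbs := by
        rcases Nat.eq_zero_or_pos (u : ℤ).natAbs with h0 | h0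
        · exact absurd (Int.natAbs_eq_zero.mp h0)
            (mem_nonZeroDivisors_iff_ne_zero.mp u.2)
        · exact h0
      exact htf z _ hs0 (by rwa [natCast_zsmul] at h2)
    intro x y hxy
    have : f (x - y) = 0 := by
      have := hfadd (x - y) y
      simp only [sub_add_cancel, hxy] at this
      -- f x = f (x-y) + f y  and f x = f y
      have h3 : f y = f (x - y) + f y := by rw [← this]
      exact add_eq_right.mp h3.symm
    exact sub_eq_zero.mp (hker _ this)
  let ι := Module.Free.ChooseBasisIndex K V
  let b : Module.Basis ι K V := Module.Free.chooseBasis K V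
  let e : K ≃ₐ[ℤ] ℚ := FractionRing.algEquiv ℤ ℚ
  letI : LinearOrder ι := IsWellOrder.linearOrder WellOrderingRel
  refine ⟨Lex (ι →₀ ℚ), inferInstance, inferInstance, inferInstance, ?_⟩
  let m : (ι →₀ ℚ) ≃+ Lex (ι →₀ ℚ) := AddEquiv.refl _
  let ψ : G → Lex (ι →₀ ℚ) :=
    fun g => m ((Finsupp.mapRange.addEquiv e.toAddEquiv) (b.repr (f g)))
  refine ⟨AddMonoidHom.mk' ψ ?_, ?_⟩
  · intro x y
    show m _ = m _ + m _
    rw [← map_add, ← map_add, ← map_add, hfadd]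
  · intro x y h
    exact hf (b.repr.injective ((Finsupp.mapRange.addEquiv e.toAddEquiv).injective
      (m.injective h)))


open Finset in
lemma Derivation.iterate_mul' {R : Type*} [CommRing R] (D : Derivation ℤ R R) (p q : R) (n : ℕ) :
    (⇑D)^[n] (p * q) =
      ∑ k ∈ range n.succ, (n.choose k • ((⇑D)^[n - k] p * (⇑D)^[k] q)) := by
  induction n with
  | zero => simp [Finset.range]
  | succ n IH =>
    calc
      (⇑D)^[n + 1] (p * q) =
          D (∑ k ∈ range n.succ,
              n.choose k • ((⇑D)^[n - k] p * (⇑D)^[k] q)) := by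
        rw [Function.iterate_succ_apply', IH]
      _ = (∑ k ∈ range n.succ,
            n.choose k • ((⇑D)^[n - k + 1] p * (⇑D)^[k] q)) +
          ∑ k ∈ range n.succ,
            n.choose k • ((⇑D)^[n - k] p * (⇑D)^[k + 1] q) := by
        rw [map_sum]
        simp_rw [map_nsmul, Derivation.leibniz, smul_eq_mul, Function.iterate_succ_apply',
          smul_add, sum_add_distrib]
        rw [add_comm]
        congr 1 <;>
          exact Finset.sum_congr rfl fun k _ => by rw [mul_comm]
      _ = (∑ k ∈ range n.succ,
                n.choose k.succ • ((⇑D)^[n - k] p * (⇑D)^[k + 1] q)) +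
              1 • ((⇑D)^[n + 1] p * (⇑D)^[0] q) +
            ∑ k ∈ range n.succ, n.choose k • ((⇑D)^[n - k] p * (⇑D)^[k + 1] q) :=
        ?_
      _ = ((∑ k ∈ range n.succ, n.choose k • ((⇑D)^[n - k] p * (⇑D)^[k + 1] q)) +
              ∑ k ∈ range n.succ,
                n.choose k.succ • ((⇑D)^[n - k] p * (⇑D)^[k + 1] q)) +
            1 • ((⇑D)^[n + 1] p * (⇑D)^[0] q) := by
        rw [add_comm, add_assoc]
      _ = (∑ i ∈ range n.succ,
              (n + 1).choose (i + 1) • ((⇑D)^[n + 1 - (i + 1)] p * (⇑D)^[i + 1] q)) +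
            1 • ((⇑D)^[n + 1] p * (⇑D)^[0] q) := by
        simp_rw [Nat.choose_succ_succ, Nat.succ_sub_succ, add_smul, sum_add_distrib]
      _ = ∑ k ∈ range n.succ.succ,
            n.succ.choose k • ((⇑D)^[n.succ - k] p * (⇑D)^[k] q) := by
        rw [sum_range_succ' _ n.succ, Nat.choose_zero_right, tsub_zero]
    congr
    refine (sum_range_succ' _ _).trans (congr_arg₂ (· + ·) ?_ ?_)
    · rw [sum_range_succ, Nat.choose_succ_self, zero_nsmul, add_zero]
      refine sum_congr rfl fun k hk => ?_
      rw [mem_range] at hk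
      congr
      omega
    · rw [Nat.choose_zero_right, tsub_zero]

lemma iterate_eventually_zero {R : Type*} [CommRing R] (D : Derivation ℤ R R) {a : R} {n m : ℕ}
    (h : (⇑D)^[n] a = 0) (hnm : n ≤ m) : (⇑D)^[m] a = 0 := by
  obtain ⟨l, rfl⟩ := Nat.exists_eq_add_of_le hnm
  rw [add_comm, Function.iterate_add_apply, h]
  exact Function.iterate_fixed (map_zero D) l

lemma iterate_deriv_sum {R : Type*} [CommRing R] (D : Derivation ℤ R R) {ι : Type*}
    (s : Finset ι) (f : ι → R) (n : ℕ) :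
    (⇑D)^[n] (∑ i ∈ s, f i) = ∑ i ∈ s, (⇑D)^[n] (f i) := by
  induction n with
  | zero => simp
  | succ m ihm =>
    rw [Function.iterate_succ_apply', ihm, map_sum]
    exact Finset.sum_congr rfl fun i _ => (Function.iterate_succ_apply' (⇑D) m (f i)).symm

lemma Derivation.unit_eq_zero {R : Type*} [CommRing R] [IsDomain R] [CharZero R]
    (D : Derivation ℤ R R) (hD : Derivation.IsLocallyNilpotentD D) (u : Rˣ) :
    D (u : R) = 0 := by
  classical
  by_contra hDu
  have hex : ∀ a : R, a ≠ 0 → ∃ p : ℕ, (⇑D)^[p] a ≠ 0 ∧ (⇑D)^[p+1] a = 0 := by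
    intro a ha
    have h1 : ∃ n, (⇑D)^[n] a = 0 := (hD a).imp fun n h => h.2
    have hN : (⇑D)^[Nat.find h1] a = 0 := Nat.find_spec h1
    have hNpos : Nat.find h1 ≠ 0 := by
      intro h; rw [h] at hN; exact ha hN
    refine ⟨Nat.find h1 - 1, Nat.find_min h1 (by omega), ?_⟩
    have he : Nat.find h1 - 1 + 1 = Nat.find h1 := by omega
    rw [he]; exact hN
  obtain ⟨p, hp1, hp2⟩ := hex u (Units.ne_zero u)
  obtain ⟨q, hq1, hq2⟩ := hex (↑u⁻¹) (Units.ne_zero u⁻¹)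
  have hp0 : 0 < p := by
    rcases Nat.eq_zero_or_pos p with h|h
    · exfalso; apply hDu
      have := hp2; rw [h] at this
      simpa using this
    · exact h
  have h1 : (⇑D)^[p+q] ((↑u⁻¹:R) * (u:R)) = 0 := by
    rw [Units.inv_mul]
    have hone : (⇑D)^[1] (1:R) = 0 := by simp
    exact iterate_eventually_zero D hone (by omega)
  rw [Derivation.iterate_mul'] at h1
  rw [Finset.sum_eq_single p] at h1
  · have hpq : p + q - p = q := by omega
    rw [hpq] at h1
    have hne : (⇑D)^[q] (↑u⁻¹:R) * (⇑D)^[p] (u:R) ≠ 0 := mul_ne_zero hq1 hp1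
    have hc : ((p+q).choose p : R) ≠ 0 :=
      Nat.cast_ne_zero.mpr (Nat.choose_pos (by omega)).ne'
    rw [nsmul_eq_mul] at h1
    exact (mul_ne_zero hc hne) h1
  · intro k hk hkq
    rcases lt_or_gt_of_ne hkq with h|h
    · rw [iterate_eventually_zero D hq2 (by omega), zero_mul, smul_zero]
    · rw [iterate_eventually_zero D hp2 (by omega), mul_zero, smul_zero]
  · intro h; exact absurd (Finset.mem_range.mpr (by omega)) h


section GradedAux
attribute [local instance] Classical.propDecidable

variable {G R : Type*} [AddCommGroup G] [DecidableEq G] [CommRing R]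
  (𝒜 : G → AddSubgroup R) [GradedRing 𝒜]

/-- The degree-`e` component of a derivation. -/
noncomputable def Tmap (D : Derivation ℤ R R) (e : G) : R →+ R :=
  (DirectSum.toAddMonoid (fun g => (GradedRing.proj 𝒜 (g + e)).comp
      (D.toLinearMap.toAddMonoidHom.comp (𝒜 g).subtype))).comp
    (DirectSum.decomposeAddEquiv 𝒜).toAddMonoidHom

lemma Tmap_of_mem (D : Derivation ℤ R R) {g : G} {x : R} (hx : x ∈ 𝒜 g) (e : G) :
    Tmap 𝒜 D e x = (DirectSum.decompose 𝒜 (D x) (g + e) : R) := by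
  unfold Tmap
  simp only [AddMonoidHom.comp_apply, AddEquiv.coe_toAddMonoidHom,
    DirectSum.decomposeAddEquiv_apply]
  rw [DirectSum.decompose_of_mem 𝒜 hx, DirectSum.toAddMonoid_of]
  simp [GradedRing.proj_apply]

lemma Tmap_mem (D : Derivation ℤ R R) {g : G} {x : R} (hx : x ∈ 𝒜 g) (e : G) :
    Tmap 𝒜 D e x ∈ 𝒜 (g + e) := by
  rw [Tmap_of_mem 𝒜 D hx e]; exact SetLike.coe_mem _

lemma Tmap_mul (D : Derivation ℤ R R) (e : G) (a b : R) :
    Tmap 𝒜 D e (a * b) = a * Tmap 𝒜 D e b + b * Tmap 𝒜 D e a := by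
  revert b
  refine DirectSum.Decomposition.inductionOn 𝒜
    (motive := fun a => ∀ b, Tmap 𝒜 D e (a * b) = a * Tmap 𝒜 D e b + b * Tmap 𝒜 D e a)
    (by intro b; simp) ?_ ?_ a
  · rintro i ⟨x, hx⟩ b
    refine DirectSum.Decomposition.inductionOn 𝒜
      (motive := fun b => Tmap 𝒜 D e (x * b) = x * Tmap 𝒜 D e b + b * Tmap 𝒜 D e x)
      (by simp) ?_ ?_ b
    · rintro j ⟨y, hy⟩
      simp only
      have hxy : x * y ∈ 𝒜 (i + j) := SetLike.mul_mem_graded hx hy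
      rw [Tmap_of_mem 𝒜 D hxy e, Tmap_of_mem 𝒜 D hy e, Tmap_of_mem 𝒜 D hx e]
      have hl : D (x * y) = x * D y + y * D x := by
        rw [D.leibniz]; simp [smul_eq_mul]
      rw [hl]
      have h1 : (DirectSum.decompose 𝒜 (x * D y + y * D x) (i + j + e) : R)
          = (DirectSum.decompose 𝒜 (x * D y) (i + j + e) : R)
            + (DirectSum.decompose 𝒜 (y * D x) (i + j + e) : R) := by
        rw [DirectSum.decompose_add]; rfl
      rw [h1]
      congr 1
      · rw [show i + j + e = i + (j + e) by abel,
          DirectSum.coe_decompose_mul_add_of_left_mem 𝒜 hx]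
      · rw [show i + j + e = j + (i + e) by abel,
          DirectSum.coe_decompose_mul_add_of_left_mem 𝒜 hy]
    · intro b c hb hc
      rw [mul_add, map_add, hb, hc, map_add]
      ring
  · intro a a' ha ha' b
    rw [add_mul, map_add, ha, ha', map_add]
    ring

/-- The degree-`e` homogeneous component of `D`, as a derivation. -/
noncomputable def Tder (D : Derivation ℤ R R) (e : G) : Derivation ℤ R R where
  toLinearMap := (Tmap 𝒜 D e).toIntLinearMap
  map_one_eq_zero' := by
    show Tmap 𝒜 D e 1 = 0
    rw [Tmap_of_mem 𝒜 D (SetLike.one_mem_graded 𝒜) e, Derivation.map_one_eq_zero]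
    simp
  leibniz' := fun a b => by
    show Tmap 𝒜 D e (a * b) = a • Tmap 𝒜 D e b + b • Tmap 𝒜 D e a
    simpa [smul_eq_mul] using Tmap_mul 𝒜 D e a b

@[simp] lemma Tder_apply (D : Derivation ℤ R R) (e : G) (x : R) :
    Tder 𝒜 D e x = Tmap 𝒜 D e x := rfl

lemma degree_unique {x : R} (hx0 : x ≠ 0) {g h : G} (hg : x ∈ 𝒜 g) (hh : x ∈ 𝒜 h) :
    g = h := by
  by_contra hne
  have h2 := DirectSum.decompose_of_mem_ne 𝒜 hg hne
  rw [DirectSum.decompose_of_mem_same 𝒜 hh] at h2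
  exact hx0 h2

lemma sum_proj_eq (x : R) :
    ∑ g ∈ DFinsupp.support (DirectSum.decompose 𝒜 x),
      (DirectSum.decompose 𝒜 x g : R) = x :=
  DirectSum.sum_support_decompose 𝒜 x

lemma proj_eq_zero_of_not_mem_support {x : R} {g : G}
    (h : g ∉ DFinsupp.support (DirectSum.decompose 𝒜 x)) :
    (DirectSum.decompose 𝒜 x g : R) = 0 := by
  rw [DFinsupp.notMem_support_iff] at h
  rw [h]; rfl

lemma decompose_mul_single {x y : R} {p q : G}
    (hx : ∀ g ∈ DFinsupp.support (DirectSum.decompose 𝒜 x),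
          ∀ h ∈ DFinsupp.support (DirectSum.decompose 𝒜 y),
          g + h = p + q → g = p ∧ h = q) :
    (DirectSum.decompose 𝒜 (x * y) (p + q) : R)
      = (DirectSum.decompose 𝒜 x p : R) * (DirectSum.decompose 𝒜 y q : R) := by
  classical
  conv_lhs => rw [← DirectSum.sum_support_decompose 𝒜 x, ← DirectSum.sum_support_decompose 𝒜 y]
  rw [Finset.sum_mul_sum]
  rw [← GradedRing.proj_apply, map_sum]
  simp_rw [map_sum]
  have hterm : ∀ g ∈ DFinsupp.support (DirectSum.decompose 𝒜 x),
      (∑ h ∈ DFinsupp.support (DirectSum.decompose 𝒜 y),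
        GradedRing.proj 𝒜 (p + q)
          ((DirectSum.decompose 𝒜 x g : R) * (DirectSum.decompose 𝒜 y h : R)))
      = if g = p then
          (DirectSum.decompose 𝒜 x p : R) * (DirectSum.decompose 𝒜 y q : R) *
            (if q ∈ DFinsupp.support (DirectSum.decompose 𝒜 y) then 1 else 0)
        else 0 := by
    intro g hg
    by_cases hgp : g = p
    · subst hgp
      rw [if_pos rfl]
      by_cases hq : q ∈ DFinsupp.support (DirectSum.decompose 𝒜 y)
      · rw [if_pos hq, mul_one, Finset.sum_eq_single q]
        · rw [GradedRing.proj_apply,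
            DirectSum.decompose_of_mem_same 𝒜
              (SetLike.mul_mem_graded (SetLike.coe_mem _) (SetLike.coe_mem _))]
        · intro h hh hhq
          rw [GradedRing.proj_apply]
          refine DirectSum.decompose_of_mem_ne 𝒜
            (SetLike.mul_mem_graded (SetLike.coe_mem _) (SetLike.coe_mem _)) ?_
          intro hc
          exact hhq (hx g hg h hh hc).2
        · intro hq'; exact absurd hq hq'
      · rw [if_neg hq, mul_zero]
        refine Finset.sum_eq_zero fun h hh => ?_
        rw [GradedRing.proj_apply]
        refine DirectSum.decompose_of_mem_ne 𝒜
          (SetLike.mul_mem_graded (SetLike.coe_mem _) (SetLike.coe_mem _)) ?_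
        intro hc
        exact hq (((hx g hg h hh hc).2 ▸ hh))
    · rw [if_neg hgp]
      refine Finset.sum_eq_zero fun h hh => ?_
      rw [GradedRing.proj_apply]
      refine DirectSum.decompose_of_mem_ne 𝒜
        (SetLike.mul_mem_graded (SetLike.coe_mem _) (SetLike.coe_mem _)) ?_
      intro hc
      exact hgp (hx g hg h hh hc).1
  rw [Finset.sum_congr rfl hterm]
  rw [Finset.sum_ite_eq' (DFinsupp.support (DirectSum.decompose 𝒜 x)) p]
  by_cases hp : p ∈ DFinsupp.support (DirectSum.decompose 𝒜 x)
  · rw [if_pos hp]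
    by_cases hq : q ∈ DFinsupp.support (DirectSum.decompose 𝒜 y)
    · rw [if_pos hq, mul_one]
    · rw [if_neg hq, mul_zero, proj_eq_zero_of_not_mem_support 𝒜 hq, mul_zero]
  · rw [if_neg hp, proj_eq_zero_of_not_mem_support 𝒜 hp, zero_mul]

lemma support_nonempty_of_ne_zero {x : R} (hx : x ≠ 0) :
    (DFinsupp.support (DirectSum.decompose 𝒜 x)).Nonempty := by
  rw [Finset.nonempty_iff_ne_empty]
  intro h
  apply hx
  conv_lhs => rw [← DirectSum.sum_support_decompose 𝒜 x]
  rw [h, Finset.sum_empty]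

lemma unit_homogeneous {L : Type*} [AddCommGroup L] [LinearOrder L] [IsOrderedAddMonoid L] (φ : G →+ L)
    (hφ : Function.Injective φ) [IsDomain R] (u : Rˣ) : ∃ g : G, (u : R) ∈ 𝒜 g := by
  classical
  set x : R := (u : R) with hxdef
  set y : R := ((u⁻¹ : Rˣ) : R) with hydef
  have hx0 : x ≠ 0 := Units.ne_zero u
  have hy0 : y ≠ 0 := Units.ne_zero u⁻¹
  set A := DFinsupp.support (DirectSum.decompose 𝒜 x) with hA
  set B := DFinsupp.support (DirectSum.decompose 𝒜 y) with hB
  have hAne : A.Nonempty := support_nonempty_of_ne_zero 𝒜 hx0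
  have hBne : B.Nonempty := support_nonempty_of_ne_zero 𝒜 hy0
  obtain ⟨ap, hap, hapmax⟩ := Finset.exists_max_image A (fun g => φ g) hAne
  obtain ⟨am, ham, hammin⟩ := Finset.exists_min_image A (fun g => φ g) hAne
  obtain ⟨bp, hbp, hbpmax⟩ := Finset.exists_max_image B (fun g => φ g) hBne
  obtain ⟨bm, hbm, hbmmin⟩ := Finset.exists_min_image B (fun g => φ g) hBne
  have hxy : x * y = 1 := Units.mul_inv u
  have hone : (1 : R) ∈ 𝒜 0 := SetLike.one_mem_graded 𝒜
  -- key computation for extreme pairs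
  have hkey : ∀ a b : G, a ∈ A → b ∈ B →
      (∀ g ∈ A, ∀ h ∈ B, g + h = a + b → g = a ∧ h = b) → a + b = 0 := by
    intro a b ha hb hcond
    have h1 : (DirectSum.decompose 𝒜 (x * y) (a + b) : R)
        = (DirectSum.decompose 𝒜 x a : R) * (DirectSum.decompose 𝒜 y b : R) :=
      decompose_mul_single 𝒜 hcond
    rw [hxy] at h1
    by_contra hab
    rw [DirectSum.decompose_of_mem_ne 𝒜 hone (Ne.symm hab)] at h1
    have hca : (DirectSum.decompose 𝒜 x a : R) ≠ 0 := by
      intro hc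
      exact (DFinsupp.mem_support_iff.mp ha) (Subtype.ext hc)
    have hcb : (DirectSum.decompose 𝒜 y b : R) ≠ 0 := by
      intro hc
      exact (DFinsupp.mem_support_iff.mp hb) (Subtype.ext hc)
    exact mul_ne_zero hca hcb h1.symm
  have hmax : ap + bp = 0 := by
    refine hkey ap bp hap hbp ?_
    intro g hg h hh hsum
    have h1 : φ g + φ h = φ ap + φ bp := by
      have := congrArg φ hsum
      simpa [map_add] using this
    have h2 : φ g ≤ φ ap := hapmax g hg
    have h3 : φ h ≤ φ bp := hbpmax h hh
    have h4 : φ g = φ ap := by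
      refine le_antisymm h2 (le_of_add_le_add_right (a := φ bp) ?_)
      rw [← h1]
      exact add_le_add_right h3 (φ g)
    have h5 : φ h = φ bp := by
      rw [h4] at h1
      exact add_left_cancel h1
    exact ⟨hφ h4, hφ h5⟩
  have hmin : am + bm = 0 := by
    refine hkey am bm ham hbm ?_
    intro g hg h hh hsum
    have h1 : φ g + φ h = φ am + φ bm := by
      have := congrArg φ hsum
      simpa [map_add] using this
    have h2 : φ am ≤ φ g := hammin g hg
    have h3 : φ bm ≤ φ h := hbmmin h hh
    have h4 : φ g = φ am := by
      refine le_antisymm (le_of_add_le_add_right (a := φ bm) ?_) h2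
      rw [← h1]
      exact add_le_add_right h3 (φ g)
    have h5 : φ h = φ bm := by
      rw [h4] at h1
      exact add_left_cancel h1
    exact ⟨hφ h4, hφ h5⟩
  -- conclude φ am = φ ap hence A is a singleton
  have hsum1 : φ ap + φ bp = 0 := by
    have := congrArg φ hmax; simpa [map_add] using this
  have hsum2 : φ am + φ bm = 0 := by
    have := congrArg φ hmin; simpa [map_add] using this
  have h2 : φ am ≤ φ ap := hammin ap hap
  have h3 : φ bm ≤ φ bp := hbmmin bp hbp
  have heq : φ am = φ ap := by
    refine le_antisymm h2 (le_of_add_le_add_right (a := φ bm) ?_)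
    calc φ ap + φ bm ≤ φ ap + φ bp := add_le_add_right h3 _
    _ = 0 := hsum1
    _ = φ am + φ bm := hsum2.symm
  have hsub : ∀ g ∈ A, g = ap := by
    intro g hg
    exact hφ (le_antisymm (hapmax g hg) (heq ▸ hammin g hg))
  refine ⟨ap, ?_⟩
  have hAsing : A = {ap} := by
    apply Finset.eq_singleton_iff_unique_mem.mpr
    exact ⟨hap, hsub⟩
  have hx : x = (DirectSum.decompose 𝒜 x ap : R) := by
    conv_lhs => rw [← DirectSum.sum_support_decompose 𝒜 x]
    rw [show DFinsupp.support (DirectSum.decompose 𝒜 x) = A from rfl, hAsing,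
      Finset.sum_singleton]
  rw [hx]
  exact SetLike.coe_mem _

lemma algebraMap_mem_deg_zero {L : Type*} [AddCommGroup L] [LinearOrder L] [IsOrderedAddMonoid L] (φ : G →+ L)
    (hφ : Function.Injective φ) [IsDomain R]
    (k : Type*) [Field k] [Algebra k R] (c : k) : algebraMap k R c ∈ 𝒜 0 := by
  by_cases hc : c = 0
  · rw [hc, map_zero]; exact zero_mem _
  have h1 : (1:R) ∈ 𝒜 0 := SetLike.one_mem_graded 𝒜
  have hone0 : (1:R) ≠ 0 := one_ne_zero
  set x := algebraMap k R c with hx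
  have hx0 : x ≠ 0 := by
    intro h
    apply hc
    apply (algebraMap k R).injective
    rw [map_zero, ← hx]
    exact h
  obtain ⟨g, hg⟩ := unit_homogeneous 𝒜 φ hφ ((Ne.isUnit hc).map (algebraMap k R)).unit
  rw [IsUnit.unit_spec] at hg
  by_cases hgz : g = 0
  · rwa [hgz] at hg
  exfalso
  by_cases hcm : c = -1
  · have h2 : (1 : R) ∈ 𝒜 g := by
      have h3 := neg_mem hg
      rw [hcm] at h3
      simpa using h3
    exact hgz (degree_unique 𝒜 hone0 h2 h1)
  · have hc1 : c + 1 ≠ 0 := fun h => hcm (eq_neg_of_add_eq_zero_left h)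
    set w := algebraMap k R (c+1) with hwdef
    have hw : w = x + 1 := by rw [hwdef, map_add, map_one]
    obtain ⟨h', hh⟩ := unit_homogeneous 𝒜 φ hφ ((Ne.isUnit hc1).map (algebraMap k R)).unit
    rw [IsUnit.unit_spec] at hh
    have hpg : (DirectSum.decompose 𝒜 w g : R) = x := by
      rw [hw]
      have h4 : (DirectSum.decompose 𝒜 (x + 1) g : R)
          = (DirectSum.decompose 𝒜 x g : R) + (DirectSum.decompose 𝒜 (1:R) g : R) := by
        rw [DirectSum.decompose_add]; rfl
      rw [h4, DirectSum.decompose_of_mem_same 𝒜 hg,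
        DirectSum.decompose_of_mem_ne 𝒜 h1 (fun hcc => hgz hcc.symm), add_zero]
    have hpz : (DirectSum.decompose 𝒜 w 0 : R) = 1 := by
      rw [hw]
      have h4 : (DirectSum.decompose 𝒜 (x + 1) (0:G) : R)
          = (DirectSum.decompose 𝒜 x (0:G) : R) + (DirectSum.decompose 𝒜 (1:R) (0:G) : R) := by
        rw [DirectSum.decompose_add]; rfl
      rw [h4, DirectSum.decompose_of_mem_same 𝒜 h1,
        DirectSum.decompose_of_mem_ne 𝒜 hg hgz, zero_add]
    have hgh : g = h' := by
      by_contra hne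
      rw [DirectSum.decompose_of_mem_ne 𝒜 hh (fun hc2 => hne hc2.symm)] at hpg
      exact hx0 hpg.symm
    have h0h : (0:G) = h' := by
      by_contra hne
      rw [DirectSum.decompose_of_mem_ne 𝒜 hh (fun hc2 => hne hc2.symm)] at hpz
      exact one_ne_zero hpz.symm
    exact hgz (hgh.trans h0h.symm)

end GradedAux

/-- Let `G` be a torsion-free abelian group and `R` a `G`-graded domain,
finitely generated as an algebra over a field of characteristic zero. If `R` is non-rigid
then there is a nonzero homogeneous locally nilpotent derivation of `R`. -/
theorem statement15 {G R : Type*} [AddCommGroup G] [DecidableEq G] [CommRing R] [IsDomain R]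
    (htf : ∀ (g : G) (n : ℕ), 0 < n → n • g = 0 → g = 0)
    (𝒜 : G → AddSubgroup R) [GradedRing 𝒜]
    (k : Type*) [Field k] [CharZero k] [Algebra k R] [Algebra.FiniteType k R]
    (hnr : ¬ IsRigidRing R) :
    ∃ D : Derivation ℤ R R, D ≠ 0 ∧ Derivation.IsLocallyNilpotentD D ∧
      ∃ d : G, ∀ i : G, ∀ x ∈ 𝒜 i, D x ∈ 𝒜 (i + d) := by
  classical
  rw [IsRigidRing] at hnr
  push_neg at hnr
  obtain ⟨D, hDln, hD0⟩ := hnr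
  obtain ⟨L, instL, instL2, instL3, φ, hφ⟩ := exists_ordered_embedding htf
  haveI : CharZero R := charZero_of_injective_algebraMap (algebraMap k R).injective
  have hDk : ∀ c : k, D (algebraMap k R c) = 0 := by
    intro c
    by_cases hc : c = 0
    · simp [hc]
    · have hu : IsUnit (algebraMap k R c) := (Ne.isUnit hc).map (algebraMap k R)
      have h2 := Derivation.unit_eq_zero D hDln hu.unit
      rwa [IsUnit.unit_spec] at h2
  have hk0 : ∀ c : k, algebraMap k R c ∈ 𝒜 0 :=
    fun c => algebraMap_mem_deg_zero 𝒜 φ hφ k c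
  have hTk : ∀ (e : G) (c : k), Tmap 𝒜 D e (algebraMap k R c) = 0 := by
    intro e c
    rw [Tmap_of_mem 𝒜 D (hk0 c) e, hDk c]
    simp
  obtain ⟨s, hs⟩ := (inferInstance : Algebra.FiniteType k R).out
  set F : Finset G := s.biUnion (fun x =>
    (DFinsupp.support (DirectSum.decompose 𝒜 x)).biUnion (fun g =>
      (DFinsupp.support (DirectSum.decompose 𝒜
          (D (DirectSum.decompose 𝒜 x g : R)))).image (fun h => h - g))) with hF
  have hTsum : ∀ (e : G) (x : R), Tmap 𝒜 D e x
      = ∑ g ∈ DFinsupp.support (DirectSum.decompose 𝒜 x),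
          (DirectSum.decompose 𝒜 (D (DirectSum.decompose 𝒜 x g : R)) (g + e) : R) := by
    intro e x
    conv_lhs => rw [← DirectSum.sum_support_decompose 𝒜 x]
    rw [map_sum]
    exact Finset.sum_congr rfl fun g hg => Tmap_of_mem 𝒜 D (SetLike.coe_mem _) e
  have hTe0 : ∀ e : G, e ∉ F → Tder 𝒜 D e = 0 := by
    intro e he
    have hgen : ∀ x ∈ s, Tmap 𝒜 D e x = 0 := by
      intro x hxs
      rw [hTsum]
      refine Finset.sum_eq_zero fun g hg => ?_
      by_contra hne
      apply he
      rw [hF]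
      refine Finset.mem_biUnion.mpr ⟨x, hxs, Finset.mem_biUnion.mpr ⟨g, hg, ?_⟩⟩
      refine Finset.mem_image.mpr ⟨g + e, ?_, by abel⟩
      rw [DFinsupp.mem_support_iff]
      intro hzz
      apply hne
      rw [hzz]
      rfl
    have hall : ∀ x : R, Tmap 𝒜 D e x = 0 := by
      intro x
      have hx : x ∈ Algebra.adjoin k (s : Set R) := by rw [hs]; trivial
      induction hx using Algebra.adjoin_induction with
      | mem y hy => exact hgen y hy
      | algebraMap c => exact hTk e c
      | add y z hy hz ihy ihz => rw [map_add, ihy, ihz, add_zero]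
      | mul y z hy hz ihy ihz => rw [Tmap_mul, ihy, ihz]; ring
    ext x
    exact hall x
  have hexe : ∃ e : G, Tder 𝒜 D e ≠ 0 := by
    by_contra hcon
    push_neg at hcon
    apply hD0
    ext b
    have hTz : ∀ (e : G) (y : R), Tmap 𝒜 D e y = 0 := by
      intro e y
      have h2 : Tmap 𝒜 D e y = Tder 𝒜 D e y := rfl
      rw [h2, hcon e]
      rfl
    have hbg : ∀ g : G, D (DirectSum.decompose 𝒜 b g : R) = 0 := by
      intro g
      set z := D (DirectSum.decompose 𝒜 b g : R) with hz
      have hcomp : ∀ h : G, (DirectSum.decompose 𝒜 z h : R) = 0 := by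
        intro h
        have h3 : (DirectSum.decompose 𝒜 z h : R)
            = Tmap 𝒜 D (h - g) (DirectSum.decompose 𝒜 b g : R) := by
          rw [Tmap_of_mem 𝒜 D (SetLike.coe_mem _) (h - g)]
          rw [show g + (h - g) = h by abel]
        rw [h3, hTz]
      have h4 : z = ∑ h ∈ DFinsupp.support (DirectSum.decompose 𝒜 z),
          (DirectSum.decompose 𝒜 z h : R) := (DirectSum.sum_support_decompose 𝒜 z).symm
      rw [h4]
      exact Finset.sum_eq_zero fun h _ => hcomp h
    have h5 : D b = ∑ g ∈ DFinsupp.support (DirectSum.decompose 𝒜 b),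
        D (DirectSum.decompose 𝒜 b g : R) := by
      conv_lhs => rw [← DirectSum.sum_support_decompose 𝒜 b]
      rw [map_sum]
    rw [Derivation.coe_zero, Pi.zero_apply, h5]
    exact Finset.sum_eq_zero fun g _ => hbg g
  have hSsub : ∀ e : G, Tder 𝒜 D e ≠ 0 → e ∈ F := by
    intro e he
    by_contra hcon
    exact he (hTe0 e hcon)
  set S' : Finset G := F.filter (fun e => Tder 𝒜 D e ≠ 0) with hS'
  have hS'ne : S'.Nonempty := by
    obtain ⟨e, he⟩ := hexe
    exact ⟨e, Finset.mem_filter.mpr ⟨hSsub e he, he⟩⟩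
  obtain ⟨d, hd, hdmax⟩ := Finset.exists_max_image S' (fun e => φ e) hS'ne
  have hd0 : Tder 𝒜 D d ≠ 0 := (Finset.mem_filter.mp hd).2
  have hbound : ∀ (g : G) (x : R), x ∈ 𝒜 g → ∀ h : G,
      (DirectSum.decompose 𝒜 (D x) h : R) ≠ 0 → φ h ≤ φ g + φ d := by
    intro g x hx h hne
    have h1 : Tmap 𝒜 D (h - g) x ≠ 0 := by
      rw [Tmap_of_mem 𝒜 D hx, show g + (h - g) = h by abel]
      exact hne
    have h2 : Tder 𝒜 D (h - g) ≠ 0 := by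
      intro hc
      apply h1
      have h3 : Tmap 𝒜 D (h - g) x = Tder 𝒜 D (h - g) x := rfl
      rw [h3, hc]
      rfl
    have h4 : φ (h - g) ≤ φ d := hdmax _ (Finset.mem_filter.mpr ⟨hSsub _ h2, h2⟩)
    rw [map_sub] at h4
    exact sub_le_iff_le_add'.mp h4
  set DT := Tder 𝒜 D d with hDT
  have claim : ∀ (n : ℕ) (g : G) (x : R), x ∈ 𝒜 g →
      (∀ h : G, (DirectSum.decompose 𝒜 ((⇑D)^[n] x) h : R) ≠ 0 → φ h ≤ φ g + n • φ d)
      ∧ (DirectSum.decompose 𝒜 ((⇑D)^[n] x) (g + n • d) : R) = (⇑DT)^[n] x := by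
    intro n
    induction n with
    | zero =>
      intro g x hx
      constructor
      · intro h hne
        simp only [Function.iterate_zero_apply] at hne
        rw [zero_nsmul, add_zero]
        by_cases hgh : h = g
        · exact le_of_eq (congrArg φ hgh)
        · rw [DirectSum.decompose_of_mem_ne 𝒜 hx (fun hc => hgh hc.symm)] at hne
          exact absurd rfl hne
      · rw [show g + 0 • d = g by rw [zero_nsmul, add_zero]]
        simp only [Function.iterate_zero_apply]
        exact DirectSum.decompose_of_mem_same 𝒜 hx
    | succ n ih =>
      intro g x hx
      obtain ⟨ih1, ih2⟩ := ih g x hx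
      set y := (⇑D)^[n] x with hy
      have hiter : (⇑D)^[n+1] x = D y := Function.iterate_succ_apply' (⇑D) n x
      have hsplit : ∀ h : G, (DirectSum.decompose 𝒜 (D y) h : R)
          = ∑ g' ∈ DFinsupp.support (DirectSum.decompose 𝒜 y),
              (DirectSum.decompose 𝒜 (D (DirectSum.decompose 𝒜 y g' : R)) h : R) := by
        intro h
        conv_lhs => rw [← DirectSum.sum_support_decompose 𝒜 y]
        rw [map_sum, ← GradedRing.proj_apply, map_sum]
        exact Finset.sum_congr rfl fun g' _ => by rw [GradedRing.proj_apply]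
      have hsuppb : ∀ g' : G, g' ∈ DFinsupp.support (DirectSum.decompose 𝒜 y) →
          φ g' ≤ φ g + n • φ d := by
        intro g' hg'
        refine ih1 g' ?_
        intro hzz
        exact (DFinsupp.mem_support_iff.mp hg') (Subtype.ext hzz)
      constructor
      · intro h hne
        rw [hiter, hsplit h] at hne
        obtain ⟨g', hg', hne'⟩ := Finset.exists_ne_zero_of_sum_ne_zero hne
        have h1 : φ h ≤ φ g' + φ d := hbound g' _ (SetLike.coe_mem _) h hne'
        have h2 : φ g' ≤ φ g + n • φ d := hsuppb g' hg'
        calc φ h ≤ φ g' + φ d := h1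
          _ ≤ (φ g + n • φ d) + φ d := add_le_add_left h2 _
          _ = φ g + (n + 1) • φ d := by rw [succ_nsmul, add_assoc]
      · rw [hiter, hsplit]
        have htarget : g + (n + 1) • d = (g + n • d) + d := by
          rw [succ_nsmul]; abel
        rw [Finset.sum_eq_single (g + n • d)]
        · by_cases hmem : g + n • d ∈ DFinsupp.support (DirectSum.decompose 𝒜 y)
          · have h7 : (⇑DT)^[n+1] x = DT ((⇑DT)^[n] x) :=
              Function.iterate_succ_apply' (⇑DT) n x
            rw [h7, ← ih2]
            have h8 : DT (DirectSum.decompose 𝒜 y (g + n • d) : R)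
                = Tmap 𝒜 D d (DirectSum.decompose 𝒜 y (g + n • d) : R) := rfl
            rw [h8, Tmap_of_mem 𝒜 D (SetLike.coe_mem _) d, htarget]
          · have h9 : (DirectSum.decompose 𝒜 y (g + n • d) : R) = 0 :=
              proj_eq_zero_of_not_mem_support 𝒜 hmem
            rw [h9]
            have h10 : (⇑DT)^[n+1] x = DT ((⇑DT)^[n] x) :=
              Function.iterate_succ_apply' (⇑DT) n x
            rw [h10, ← ih2, h9, map_zero]
            simp
        · intro g' hg' hgne
          by_contra hne'
          have h1 : φ (g + (n+1) • d) ≤ φ g' + φ d :=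
            hbound g' _ (SetLike.coe_mem _) _ hne'
          have h2 : φ g' ≤ φ g + n • φ d := hsuppb g' hg'
          have h3 : φ (g + (n+1) • d) = φ g + n • φ d + φ d := by
            rw [map_add, map_nsmul, succ_nsmul, add_assoc]
          have h4 : φ g' + φ d ≤ (φ g + n • φ d) + φ d := add_le_add_left h2 _
          have h5 : φ g' = φ g + n • φ d := by
            have h6 : φ g' + φ d = (φ g + n • φ d) + φ d :=
              le_antisymm h4 (by rw [← h3]; exact h1)
            exact add_right_cancel h6
          apply hgne
          refine hφ ?_
          rw [h5, map_add, map_nsmul]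
        · intro hmem
          have h9 : (DirectSum.decompose 𝒜 y (g + n • d) : R) = 0 :=
            proj_eq_zero_of_not_mem_support 𝒜 hmem
          rw [h9, map_zero]
          simp
  have hDTln : Derivation.IsLocallyNilpotentD DT := by
    intro b
    have hcomp : ∀ g : G, ∃ n : ℕ, 0 < n ∧
        (⇑DT)^[n] (DirectSum.decompose 𝒜 b g : R) = 0 := by
      intro g
      obtain ⟨n, hn, hzero⟩ := hDln (DirectSum.decompose 𝒜 b g : R)
      refine ⟨n, hn, ?_⟩
      have h1 := (claim n g (DirectSum.decompose 𝒜 b g : R) (SetLike.coe_mem _)).2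
      rw [hzero] at h1
      rw [← h1]
      simp
    choose nfun hn1 hn2 using hcomp
    set N := (DFinsupp.support (DirectSum.decompose 𝒜 b)).sup nfun + 1 with hN
    refine ⟨N, Nat.succ_pos _, ?_⟩
    conv_lhs => rw [← DirectSum.sum_support_decompose 𝒜 b]
    rw [iterate_deriv_sum DT]
    refine Finset.sum_eq_zero fun g hg => ?_
    refine iterate_eventually_zero DT (hn2 g) ?_
    have h11 := Finset.le_sup (f := nfun) hg
    omega
  refine ⟨DT, hd0, hDTln, d, ?_⟩
  intro i x hx
  exact Tmap_mem 𝒜 D hx d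
end

section
/- Let G be a torsion abelian group, S = ⊕_{i∈G} S_i a G-graded commutative ring, and R = ⊕_{i∈G} R_i a graded subring of S. Suppose that (i) S = R[v] is a polynomial ring in one variable over R generated by a homogeneous element v of S, and (ii) the set H = { i ∈ G : R_i ≠ 0 } is a subgroup of G. Then at least one of the following holds: (a) S_0 is a polynomial ring in one variable over R_0; (b) there exists e ∈ H∖{0} such that, if k > 0 denotes the order of e in H, then for every r ∈ R_e∖{0}, the localization (S_0)_{r^k} of S_0 at the powers of r^k is a polynomial ring in one variable over some subring. -/
/-- The degree-zero part `S₀` as a subring, for a grading by additive subgroups. -/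
def degZeroSubringA {G S : Type*} [AddCommGroup G] [CommRing S]
    (𝒮 : G → AddSubgroup S) [SetLike.GradedMonoid 𝒮] : Subring S where
  carrier := (𝒮 0 : Set S)
  zero_mem' := zero_mem _
  one_mem' := SetLike.one_mem_graded 𝒮
  add_mem' := fun ha hb => add_mem ha hb
  neg_mem' := fun ha => neg_mem ha
  mul_mem' := fun ha hb => by simpa using SetLike.mul_mem_graded ha hb

open Polynomial in
private lemma decomp_aux {G S : Type*} [AddCommGroup G] [DecidableEq G] [CommRing S]
    (𝒮 : G → AddSubgroup S) [GradedRing 𝒮]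
    (R : Subring S)
    (hRgraded : ∀ r ∈ R, ∀ i : G, ((DirectSum.decompose 𝒮 r i : 𝒮 i) : S) ∈ R)
    (v : S) (g : G) (hv : v ∈ 𝒮 g)
    (hsurj : Function.Surjective (Polynomial.eval₂RingHom R.subtype v))
    (s : S) (hs : s ∈ 𝒮 (0 : G)) :
    ∃ p : Polynomial R, (∀ j : ℕ, ((p.coeff j : S)) ∈ 𝒮 (-(j • g))) ∧
      Polynomial.eval₂ R.subtype v p = s := by
  obtain ⟨q, hq⟩ := hsurj s
  have hd : ∀ j : ℕ, ((DirectSum.decompose 𝒮 ((q.coeff j : S)) (-(j • g)) : 𝒮 _) : S) ∈ R :=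
    fun j => hRgraded _ (q.coeff j).2 _
  let d : ℕ → R := fun j => ⟨_, hd j⟩
  refine ⟨∑ j ∈ q.support, Polynomial.C (d j) * Polynomial.X ^ j, ?_, ?_⟩
  · intro n
    rw [Polynomial.finset_sum_coeff]
    simp only [Polynomial.coeff_C_mul, Polynomial.coeff_X_pow, mul_ite, mul_one, mul_zero]
    rw [Finset.sum_ite_eq q.support n d]
    split
    · exact (DirectSum.decompose 𝒮 ((q.coeff n : S)) (-(n • g))).2
    · exact zero_mem _
  · have hπmem : ∀ x : S, ((DirectSum.decompose 𝒮 x 0 : 𝒮 0) : S) = ((DirectSum.decompose 𝒮 x 0 : 𝒮 0) : S) := fun _ => rfl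
    let π : S →+ S :=
      { toFun := fun x => ((DirectSum.decompose 𝒮 x 0 : 𝒮 0) : S)
        map_zero' := by simp
        map_add' := fun x y => by
          simp [DirectSum.decompose_add] }
    have hπ : ∀ (a : R) (j : ℕ), π ((a : S) * v ^ j) = ((d j) : S) * v ^ j → True := fun _ _ _ => trivial
    have key : ∀ (a : S) (j : ℕ), π (a * v ^ j)
        = ((DirectSum.decompose 𝒮 a (-(j • g)) : 𝒮 _) : S) * v ^ j := by
      intro a j
      have hvj : v ^ j ∈ 𝒮 (j • g) := SetLike.pow_mem_graded j hv
      have h0 : (0 : G) = -(j • g) + j • g := by simp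
      show ((DirectSum.decompose 𝒮 (a * v ^ j) 0 : 𝒮 0) : S) = _
      rw [h0]
      exact DirectSum.coe_decompose_mul_add_of_right_mem 𝒮 hvj
    have hs' : s = ∑ j ∈ q.support, ((q.coeff j : S)) * v ^ j := by
      rw [← hq]
      simp only [Polynomial.coe_eval₂RingHom]
      rw [Polynomial.eval₂_eq_sum, Polynomial.sum]
      simp
    have hπs : π s = s := DirectSum.decompose_of_mem_same 𝒮 hs
    rw [Polynomial.eval₂_finset_sum]
    simp only [Polynomial.eval₂_mul, Polynomial.eval₂_C, Polynomial.eval₂_X_pow]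
    calc ∑ j ∈ q.support, (R.subtype (d j)) * v ^ j
        = ∑ j ∈ q.support, π ((q.coeff j : S) * v ^ j) := by
          refine Finset.sum_congr rfl fun j _ => ?_
          rw [key]
          rfl
      _ = π (∑ j ∈ q.support, ((q.coeff j : S)) * v ^ j) := (map_sum π _ _).symm
      _ = π s := by rw [← hs']
      _ = s := hπs

set_option maxHeartbeats 2000000 in
set_option synthInstance.maxHeartbeats 400000 in
/-- Let `G` be a torsion abelian group, `S` a `G`-graded ring, `R` a graded
subring with `S = R[v]` for a homogeneous `v`, and suppose `H = {i : R_i ≠ 0}` is a subgroup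
of `G`. Then either (a) `S₀` is a polynomial ring in one variable over `R₀`, or (b) there is
`e ∈ H∖{0}` such that, `k` being the order of `e`, for every `0 ≠ r ∈ R_e` the localization
`(S₀)_{r^k}` is a polynomial ring in one variable. -/
theorem statement17 {G S : Type*} [AddCommGroup G] [DecidableEq G] [CommRing S]
    (𝒮 : G → AddSubgroup S) [GradedRing 𝒮]
    (htor : ∀ g : G, ∃ n : ℕ, 0 < n ∧ n • g = 0)
    (R : Subring S)
    (hRgraded : ∀ r ∈ R, ∀ i : G, ((DirectSum.decompose 𝒮 r i : 𝒮 i) : S) ∈ R)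
    (v : S) (g : G) (hv : v ∈ 𝒮 g)
    (hpoly : Function.Bijective (Polynomial.eval₂RingHom R.subtype v))
    (H : AddSubgroup G)
    (hH : (H : Set G) = {i : G | ∃ x ∈ R, x ∈ 𝒮 i ∧ x ≠ 0}) :
    IsPolynomialRingOver (R.comap (degZeroSubringA 𝒮).subtype) ∨
    ∃ e : G, e ∈ H ∧ e ≠ 0 ∧ ∀ r : S, r ∈ R → r ∈ 𝒮 e → r ≠ 0 →
      ∀ h : r ^ addOrderOf e ∈ degZeroSubringA 𝒮,
        IsPolynomialRingInOneVariable
          (Localization.Away (⟨r ^ addOrderOf e, h⟩ : degZeroSubringA 𝒮)) := by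
  classical
  let S₀ : Subring S := degZeroSubringA 𝒮
  -- the subgroup K = {j : ℤ | j • g ∈ H}
  let K : AddSubgroup ℤ :=
    { carrier := {j : ℤ | j • g ∈ H}
      zero_mem' := by simpa using H.zero_mem
      add_mem' := fun {a b} ha hb => by
        simpa [add_zsmul] using H.add_mem ha hb
      neg_mem' := fun {a} ha => by
        simpa [neg_zsmul] using H.neg_mem ha }
  obtain ⟨a, hK⟩ := Int.subgroup_cyclic K
  obtain ⟨n, hn, hng⟩ := htor g
  have hnK : (n : ℤ) ∈ K := by
    show ((n : ℤ)) • g ∈ H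
    rw [natCast_zsmul, hng]
    exact H.zero_mem
  have ha0 : a ≠ 0 := by
    rintro rfl
    rw [hK, AddSubgroup.closure_singleton_zero, AddSubgroup.mem_bot] at hnK
    exact absurd (by exact_mod_cast hnK) hn.ne'
  set m := a.natAbs with hmdef
  have hm : 0 < m := Int.natAbs_pos.mpr ha0
  have hmemK : ∀ j : ℤ, j ∈ K ↔ (m : ℤ) ∣ j := by
    intro j
    rw [hK, AddSubgroup.mem_closure_singleton]
    rw [show ((m : ℤ) ∣ j) ↔ a ∣ j from Int.natAbs_dvd]
    constructor
    · rintro ⟨c, rfl⟩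
      exact Dvd.intro_left c (by rw [zsmul_eq_mul, Int.cast_id])
    · rintro ⟨c, rfl⟩
      exact ⟨c, by rw [zsmul_eq_mul, Int.cast_id, mul_comm]⟩
  have hcoeffdvd : ∀ (j : ℕ) (x : S), x ∈ R → x ∈ 𝒮 (-(j • g)) → x ≠ 0 → m ∣ j := by
    intro j x hxR hxg hxne
    have hmem : -(j • g) ∈ (H : Set G) := by
      rw [hH]; exact ⟨x, hxR, hxg, hxne⟩
    have hjK : -((j : ℤ)) ∈ K := by
      show (-(j : ℤ)) • g ∈ H
      rw [neg_zsmul, natCast_zsmul]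
      exact hmem
    have : ((j : ℤ)) ∈ K := by simpa using K.neg_mem hjK
    exact_mod_cast (hmemK _).mp this
  have hinj' : ∀ p : Polynomial R, Polynomial.eval₂ R.subtype v p = 0 → p = 0 := by
    intro p hp
    apply hpoly.1
    simpa using hp
  have hmK : ((m : ℤ)) ∈ K := (hmemK _).mpr dvd_rfl
  have hmH : m • g ∈ H := by
    have : ((m : ℤ)) • g ∈ H := hmK
    rwa [natCast_zsmul] at this
  by_cases hmg : m • g = 0
  · -- Case (a)
    left
    have hvm : v ^ m ∈ S₀ := by
      have h1 := SetLike.pow_mem_graded m hv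
      rw [hmg] at h1
      exact h1
    let R₀ : Subring S₀ := R.comap S₀.subtype
    let vm : S₀ := ⟨v ^ m, hvm⟩
    let u : R₀ →+* R :=
      { toFun := fun x => ⟨(x : S₀), x.2⟩
        map_one' := rfl
        map_mul' := fun _ _ => rfl
        map_zero' := rfl
        map_add' := fun _ _ => rfl }
    have huinj : Function.Injective u := by
      intro x y hxy
      have h2 : ((x : S₀) : S) = ((y : S₀) : S) := congrArg (fun z : R => (z : S)) hxy
      exact Subtype.ext (Subtype.ext h2)
    let φ : Polynomial R₀ →+* S₀ := Polynomial.eval₂RingHom (Subring.subtype R₀) vm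
    have hφval : ∀ q : Polynomial R₀,
        ((φ q : S₀) : S) = Polynomial.eval₂ R.subtype v
          ((Polynomial.expand R m) (q.map u)) := by
      intro q
      show S₀.subtype (Polynomial.eval₂ (Subring.subtype R₀) vm q) = _
      rw [Polynomial.hom_eval₂]
      rw [Polynomial.eval₂_eq_eval_map, Polynomial.eval₂_eq_eval_map]
      rw [Polynomial.map_expand, Polynomial.expand_eval, Polynomial.map_map]
      rfl
    have hφinj : Function.Injective φ := by
      rw [injective_iff_map_eq_zero]
      intro q hq
      have h1 : Polynomial.eval₂ R.subtype v ((Polynomial.expand R m) (q.map u)) = 0 := by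
        rw [← hφval q, hq]; rfl
      have h2 := hinj' _ h1
      have h3 : q.map u = 0 := Polynomial.expand_injective hm (by rw [h2, map_zero])
      exact Polynomial.map_injective u huinj (by rw [h3, Polynomial.map_zero])
    have hφsurj : Function.Surjective φ := by
      intro s
      obtain ⟨p, hpmem, hpev⟩ := decomp_aux 𝒮 R hRgraded v g hv hpoly.2 (s : S) s.2
      have hc0 : ∀ j : ℕ, ((p.coeff j : S)) ∈ 𝒮 (0 : G) := by
        intro j
        by_cases hz : p.coeff j = 0
        · rw [hz]; exact zero_mem _
        · have hdvd : m ∣ j := by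
            refine hcoeffdvd j _ (p.coeff j).2 (hpmem j) ?_
            simpa using fun h => hz (Subtype.ext h)
          obtain ⟨t, rfl⟩ := hdvd
          have hjg : (m * t) • g = 0 := by
            rw [mul_comm, mul_smul, hmg, smul_zero]
          have := hpmem (m * t)
          rw [hjg, neg_zero] at this
          exact this
      let c : ℕ → R₀ := fun j => ⟨⟨(p.coeff j : S), hc0 j⟩, (p.coeff j).2⟩
      refine ⟨∑ j ∈ p.support, Polynomial.C (c j) * Polynomial.X ^ (j / m), ?_⟩
      apply Subtype.ext
      have hQ : ((φ (∑ j ∈ p.support, Polynomial.C (c j) * Polynomial.X ^ (j / m)) : S₀) : S)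
          = ∑ j ∈ p.support, ((p.coeff j : S)) * v ^ j := by
        show S₀.subtype (Polynomial.eval₂ R₀.subtype vm _) = _
        rw [Polynomial.eval₂_finset_sum, map_sum]
        refine Finset.sum_congr rfl fun j hj => ?_
        have hdvd : m ∣ j := hcoeffdvd j _ (p.coeff j).2 (hpmem j)
          (fun h => Polynomial.mem_support_iff.mp hj (Subtype.ext h))
        rw [Polynomial.eval₂_mul, Polynomial.eval₂_C, Polynomial.eval₂_X_pow, map_mul, map_pow]
        show ((p.coeff j : S)) * (v ^ m) ^ (j / m) = _
        rw [← pow_mul, Nat.mul_div_cancel' hdvd]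
      rw [hQ, ← hpev, Polynomial.eval₂_eq_sum, Polynomial.sum]
      rfl
    refine ⟨(RingEquiv.ofBijective φ ⟨hφinj, hφsurj⟩).symm, fun r => ?_⟩
    have hEC : (RingEquiv.ofBijective φ ⟨hφinj, hφsurj⟩) (Polynomial.C r) = (r : S₀) := by
      show φ (Polynomial.C r) = (r : S₀)
      show Polynomial.eval₂ R₀.subtype vm (Polynomial.C r) = (r : S₀)
      rw [Polynomial.eval₂_C]
      rfl
    rw [← hEC, RingEquiv.symm_apply_apply]
  · -- Case (b)
    right
    refine ⟨-(m • g), H.neg_mem hmH, fun h0 => hmg (neg_eq_zero.mp h0), ?_⟩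
    intro r hrR hre hrne hpow
    set e : G := -(m • g) with he
    set k : ℕ := addOrderOf e with hkdef
    have hfin : IsOfFinAddOrder e := by
      obtain ⟨n', hn', hne'⟩ := htor e
      exact isOfFinAddOrder_iff_nsmul_eq_zero.mpr ⟨n', hn', hne'⟩
    have hkpos : 0 < k := hfin.addOrderOf_pos
    have hke : k • e = 0 := addOrderOf_nsmul_eq_zero e
    obtain ⟨k', hk'⟩ : ∃ k', k = k' + 1 := ⟨k - 1, (Nat.succ_pred_eq_of_pos hkpos).symm⟩
    set ρ : S₀ := (⟨r ^ k, hpow⟩ : S₀) with hρdef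
    set L := Localization.Away ρ with hLdef
    let α : S₀ →+* L := algebraMap S₀ L
    let R₀ : Subring S₀ := R.comap S₀.subtype
    have hρR : ρ ∈ R₀ := pow_mem hrR k
    let ρR : R₀ := ⟨ρ, hρR⟩
    have hUnit : IsUnit (α ρ) := IsLocalization.Away.algebraMap_isUnit ρ
    have hUnitc : IsUnit ((α.comp R₀.subtype) ρR) := hUnit
    let ψ : Localization.Away ρR →+* L := Localization.awayLift (α.comp R₀.subtype) ρR hUnitc
    have hψa : ∀ x : R₀, ψ (algebraMap R₀ (Localization.Away ρR) x) = α (x : S₀) :=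
      fun x => IsLocalization.Away.lift_eq ρR hUnitc x
    let A : Subring L := ψ.range
    have hTmem : r * v ^ m ∈ S₀ := by
      have h1 := SetLike.mul_mem_graded hre (SetLike.pow_mem_graded m hv)
      rwa [he, neg_add_cancel] at h1
    let vm0 : S₀ := ⟨r * v ^ m, hTmem⟩
    let T : L := α vm0
    let Φ : Polynomial A →+* L := Polynomial.eval₂RingHom A.subtype T
    have hΦC : ∀ a : A, Φ (Polynomial.C a) = (a : L) := fun a => Polynomial.eval₂_C _ _
    have hΦX : Φ Polynomial.X = T := Polynomial.eval₂_X _ _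
    have hΦinj : Function.Injective Φ := by
      rw [injective_iff_map_eq_zero]
      intro q hq
      have hrep : ∀ i : ℕ, ∃ (x : S₀) (ℓ : ℕ), x ∈ R₀ ∧
          ((q.coeff i : L)) * (α ρ) ^ ℓ = α x := by
        intro i
        obtain ⟨y, hy⟩ := (q.coeff i).2
        obtain ⟨ℓ, x, hx⟩ := IsLocalization.Away.surj (S := Localization.Away ρR) ρR y
        refine ⟨(x : S₀), ℓ, x.2, ?_⟩
        have h2 := congrArg ψ hx
        rw [map_mul, map_pow, hψa, hψa] at h2
        rw [← hy]
        exact h2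
      choose xx ℓℓ hxxR hxx using hrep
      set D := q.natDegree with hDdef
      set Lm := (Finset.range (D + 1)).sup ℓℓ with hLmdef
      have hx' : ∀ i ∈ Finset.range (D + 1),
          ((q.coeff i : L)) * (α ρ) ^ Lm = α (xx i * ρ ^ (Lm - ℓℓ i)) := by
        intro i hi
        have hle : ℓℓ i ≤ Lm := Finset.le_sup hi
        rw [map_mul, map_pow, ← hxx i, mul_assoc, ← pow_add, Nat.add_sub_cancel' hle]
      set W : S₀ := ∑ i ∈ Finset.range (D + 1), (xx i * ρ ^ (Lm - ℓℓ i)) * vm0 ^ i with hWdef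
      have h0 : (0 : L) = ∑ i ∈ Finset.range (D + 1), ((q.coeff i : L)) * T ^ i := by
        rw [← hq]
        show Polynomial.eval₂ A.subtype T q = _
        rw [Polynomial.eval₂_eq_sum_range]
        rfl
      have hW0 : α W = 0 := by
        have h1 : ∑ i ∈ Finset.range (D + 1), ((q.coeff i : L)) * T ^ i * (α ρ) ^ Lm = 0 := by
          rw [← Finset.sum_mul, ← h0, zero_mul]
        rw [map_sum, ← h1]
        refine Finset.sum_congr rfl fun i hi => ?_
        rw [map_mul, map_pow, mul_right_comm, hx' i hi]
      obtain ⟨N, hN⟩ := IsLocalization.Away.exists_of_eq (S := L) (x := ρ)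
        (show α W = α 0 by rw [hW0, map_zero])
      rw [mul_zero] at hN
      let b : ℕ → R := fun i =>
        ⟨r ^ (k * N + i) * ((xx i : S₀) : S) * ((r ^ k) ^ (Lm - ℓℓ i)),
          mul_mem (mul_mem (pow_mem hrR _) (hxxR i)) (pow_mem (pow_mem hrR k) _)⟩
      let P : Polynomial R :=
        ∑ i ∈ Finset.range (D + 1), Polynomial.C (b i) * Polynomial.X ^ (m * i)
      have hρc : ((ρ : S₀) : S) = r ^ k := rfl
      have hvmc : ((vm0 : S₀) : S) = r * v ^ m := rfl
      have hPev : Polynomial.eval₂ R.subtype v P = 0 := by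
        have h1 : ((ρ ^ N * W : S₀) : S) = 0 := by rw [hN]; rfl
        have hWc : ((W : S₀) : S) = ∑ i ∈ Finset.range (D + 1),
            (((xx i * ρ ^ (Lm - ℓℓ i)) * vm0 ^ i : S₀) : S) := by
          rw [hWdef]
          exact map_sum S₀.subtype _ _
        rw [show ((ρ ^ N * W : S₀) : S) = ((ρ ^ N : S₀) : S) * ((W : S₀) : S) from rfl,
          hWc, Finset.mul_sum] at h1
        show Polynomial.eval₂ R.subtype v
          (∑ i ∈ Finset.range (D + 1), Polynomial.C (b i) * Polynomial.X ^ (m * i)) = 0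
        rw [Polynomial.eval₂_finset_sum, ← h1]
        refine Finset.sum_congr rfl fun i hi => ?_
        rw [Polynomial.eval₂_mul, Polynomial.eval₂_C, Polynomial.eval₂_X_pow]
        show (r ^ (k * N + i) * ((xx i : S₀) : S) * ((r ^ k) ^ (Lm - ℓℓ i))) * v ^ (m * i) = _
        push_cast [hρc, hvmc]
        ring
      have hP0 : P = 0 := hinj' _ hPev
      have hb0 : ∀ i ∈ Finset.range (D + 1), ((b i : S)) = 0 := by
        intro i hi
        have hc : P.coeff (m * i) = b i := by
          show (∑ j ∈ Finset.range (D + 1),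
            Polynomial.C (b j) * Polynomial.X ^ (m * j)).coeff (m * i) = b i
          rw [Polynomial.finset_sum_coeff]
          have hterm : ∀ j ∈ Finset.range (D + 1),
              (Polynomial.C (b j) * Polynomial.X ^ (m * j)).coeff (m * i)
              = if i = j then b j else 0 := by
            intro j _
            rw [Polynomial.coeff_C_mul, Polynomial.coeff_X_pow]
            by_cases hij : i = j
            · subst hij; simp
            · have hne2 : ¬ (m * i = m * j) := fun hmm =>
                hij (Nat.eq_of_mul_eq_mul_left hm hmm)
              simp [hne2, hij]
          rw [Finset.sum_congr rfl hterm, Finset.sum_ite_eq _ i b, if_pos hi]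
        have h2 : P.coeff (m * i) = 0 := by rw [hP0]; simp
        rw [hc] at h2
        exact congrArg (fun z : R => (z : S)) h2
      apply Polynomial.ext
      intro i
      rw [Polynomial.coeff_zero]
      by_cases hiD : i ∈ Finset.range (D + 1)
      · have hz : α (xx i * ρ ^ (Lm - ℓℓ i)) = 0 := by
          have hS0 : ρ ^ (N + i) * (xx i * ρ ^ (Lm - ℓℓ i)) = 0 := by
            apply Subtype.ext
            have hbi := hb0 i hiD
            push_cast
            show (r ^ k) ^ (N + i) * (((xx i : S₀) : S) * ((r ^ k)) ^ (Lm - ℓℓ i)) = 0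
            have hexp : (r ^ k) ^ (N + i) = r ^ (k' * i) * r ^ (k * N + i) := by
              rw [← pow_mul, ← pow_add]
              congr 1
              rw [hk']
              ring
            rw [hexp]
            calc r ^ (k' * i) * r ^ (k * N + i) * (((xx i : S₀) : S) * ((r ^ k)) ^ (Lm - ℓℓ i))
                = r ^ (k' * i) *
                  (r ^ (k * N + i) * ((xx i : S₀) : S) * ((r ^ k)) ^ (Lm - ℓℓ i)) := by ring
              _ = r ^ (k' * i) * ((b i : S)) := rfl
              _ = 0 := by rw [hbi, mul_zero]
          have h5 := congrArg α hS0
          rw [map_mul, map_zero] at h5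
          have hu : IsUnit (α (ρ ^ (N + i))) := by rw [map_pow]; exact hUnit.pow _
          exact (IsUnit.mul_right_eq_zero hu).mp h5
        have h3 : ((q.coeff i : L)) * (α ρ) ^ Lm = 0 := by rw [hx' i hiD, hz]
        have h4 : ((q.coeff i : L)) = 0 :=
          (IsUnit.mul_left_eq_zero (hUnit.pow Lm)).mp h3
        exact Subtype.ext h4
      · exact Polynomial.coeff_eq_zero_of_natDegree_lt
          (by simpa [Finset.mem_range, Nat.lt_succ_iff, not_le] using hiD)
    have hAsub : ∀ w : L, w ∈ A → w ∈ Φ.range := fun w hw =>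
      RingHom.mem_range.mpr ⟨Polynomial.C ⟨w, hw⟩, hΦC _⟩
    have hΦsurj : Function.Surjective Φ := by
      have hrange : ∀ s : S₀, α s ∈ Φ.range := by
        intro s
        obtain ⟨p, hpmem, hpev⟩ := decomp_aux 𝒮 R hRgraded v g hv hpoly.2 (s : S) s.2
        have hsjmem : ∀ j : ℕ, ((p.coeff j : S)) * v ^ j ∈ S₀ := by
          intro j
          have h1 := SetLike.mul_mem_graded (hpmem j) (SetLike.pow_mem_graded j hv)
          rwa [neg_add_cancel] at h1
        let sj : ℕ → S₀ := fun j => ⟨_, hsjmem j⟩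
        have hsum : s = ∑ j ∈ p.support, sj j := by
          apply Subtype.ext
          push_cast
          rw [← hpev, Polynomial.eval₂_eq_sum, Polynomial.sum]
          rfl
        rw [hsum, map_sum]
        refine Subring.sum_mem _ fun j hj => ?_
        have hdvd : m ∣ j := hcoeffdvd j _ (p.coeff j).2 (hpmem j)
          (fun hh => Polynomial.mem_support_iff.mp hj (Subtype.ext hh))
        obtain ⟨t, hjt⟩ := hdvd
        have hcj : ((p.coeff j : S)) ∈ 𝒮 (t • e) := by
          have h1 := hpmem j
          have h2 : -(j • g) = t • e := by
            rw [he, smul_neg, hjt, mul_comm, mul_smul]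
          rwa [h2] at h1
        have hxmem : ((p.coeff j : S)) * r ^ (t * k') ∈ S₀ := by
          have h1 := SetLike.mul_mem_graded hcj (SetLike.pow_mem_graded (t * k') hre)
          have h2 : t • e + (t * k') • e = (0 : G) := by
            rw [← add_nsmul]
            have h3 : t + t * k' = t * k := by rw [hk']; ring
            rw [h3, mul_comm t k, mul_nsmul, hke, smul_zero]
          rwa [h2] at h1
        let xj : S₀ := ⟨_, hxmem⟩
        have hxjR : xj ∈ R₀ := mul_mem (p.coeff j).2 (pow_mem hrR _)
        let xR : R₀ := ⟨xj, hxjR⟩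
        let yj := IsLocalization.mk' (Localization.Away ρR) xR
          (⟨ρR ^ t, Submonoid.pow_mem _ (Submonoid.mem_powers ρR) t⟩ : Submonoid.powers ρR)
        have hstep : ψ yj * α (ρ ^ t) = α (xj : S₀) := by
          have h1 : yj * algebraMap R₀ (Localization.Away ρR) (ρR ^ t)
              = algebraMap R₀ (Localization.Away ρR) xR :=
            IsLocalization.mk'_spec (Localization.Away ρR) xR _
          have h2 := congrArg ψ h1
          rw [map_mul, hψa, hψa] at h2
          have h3 : ((ρR ^ t : R₀) : S₀) = ρ ^ t := rfl
          rw [h3] at h2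
          exact h2
        have hker : xj * vm0 ^ t = sj j * ρ ^ t := by
          apply Subtype.ext
          push_cast
          show ((p.coeff j : S)) * r ^ (t * k') * (r * v ^ m) ^ t
              = ((p.coeff j : S)) * v ^ j * (r ^ k) ^ t
          rw [hjt, hk']
          ring
        have hclaim : ψ yj * T ^ t = α (sj j) := by
          have hu : IsUnit (α (ρ ^ t)) := by rw [map_pow]; exact hUnit.pow t
          apply hu.mul_left_cancel
          rw [mul_comm (α (ρ ^ t)) (ψ yj * T ^ t), mul_comm (α (ρ ^ t)) (α (sj j))]
          rw [mul_right_comm, hstep]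
          show α xj * (α vm0) ^ t = _
          rw [← map_pow, ← map_mul, ← map_mul, hker]
        rw [← hclaim]
        exact mul_mem (hAsub _ ⟨yj, rfl⟩) (pow_mem (RingHom.mem_range.mpr ⟨Polynomial.X, hΦX⟩) t)
      intro z
      obtain ⟨nz, sz, hsz⟩ := IsLocalization.Away.surj (S := L) ρ z
      set w : L := ψ (IsLocalization.mk' (Localization.Away ρR) (1 : R₀)
        (⟨ρR, Submonoid.mem_powers ρR⟩ : Submonoid.powers ρR)) with hwdef
      have hw1 : w * α ρ = 1 := by
        have h1 := IsLocalization.mk'_spec (Localization.Away ρR) (1 : R₀)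
          (⟨ρR, Submonoid.mem_powers ρR⟩ : Submonoid.powers ρR)
        have h2 := congrArg ψ h1
        rw [map_mul, hψa, hψa] at h2
        simpa using h2
      have hz : z = α sz * w ^ nz := by
        have h1 : (α ρ * w) = 1 := by rw [mul_comm]; exact hw1
        calc z = z * ((α ρ) ^ nz * w ^ nz) := by rw [← mul_pow, h1, one_pow, mul_one]
          _ = (z * (α ρ) ^ nz) * w ^ nz := by ring
          _ = α sz * w ^ nz := by rw [hsz]
      have hmem : z ∈ Φ.range := by
        rw [hz]
        exact mul_mem (hrange sz) (pow_mem (hAsub w ⟨_, rfl⟩) nz)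
      exact RingHom.mem_range.mp hmem
    refine ⟨A, (RingEquiv.ofBijective Φ ⟨hΦinj, hΦsurj⟩).symm, fun aa => ?_⟩
    have hEC : (RingEquiv.ofBijective Φ ⟨hΦinj, hΦsurj⟩) (Polynomial.C aa) = (aa : L) := hΦC aa
    rw [← hEC, RingEquiv.symm_apply_apply]
end
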